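/- arXiv:1911.11628 — 5 statements merged into one kernel-verified Lean document; each statement's English description precedes it below -/
import Mathlib

section
/- Let f, g : ℝⁿ → ℝⁿ be C¹ vector fields and x₀ ∈ ℝⁿ. For each t > 0 let x^t denote the single-switch trajectory with data (f, g, t, x₀). Then, as t → 0⁺, x^t(2t) − x₀ = (f(x₀) + g(x₀)) t + ( D(f+g)(x₀)(f(x₀)+g(x₀)) + [f,g](x₀) ) t²/2 + o(t²), i.e. the function t ↦ x^t(2t) − x₀ − (f(x₀)+g(x₀))t − (D(f+g)(x₀)(f(x₀)+g(x₀)) + [f,g](x₀)) t²/2 is o(t²) as t → 0⁺. -/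
open Set Filter Metric Matrix MeasureTheory Asymptotics
open scoped RealInnerProductSpace ENNReal Topology

noncomputable section

/-- Euclidean `n`-space. -/
abbrev Euc (n : ℕ) : Type := EuclideanSpace ℝ (Fin n)

/-- The Lie bracket `[f,g](x) = Dg(x) f(x) - Df(x) g(x)`. -/
def lieBracket {n : ℕ} (f g : Euc n → Euc n) (x : Euc n) : Euc n :=
  fderiv ℝ g x (f x) - fderiv ℝ f x (g x)

/-- Second-order Hamiltonian `H_{f,g} u (x) = ∇(∇u·g)(x) · f(x)`. -/
def H2 {n : ℕ} (f g : Euc n → Euc n) (u : Euc n → ℝ) (x : Euc n) : ℝ :=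
  fderiv ℝ (fun y => ⟪gradient u y, g y⟫) x (f x)

/-- Single-switch trajectory with data `(f, g, t, x₀)`: Carathéodory solution following `f`
on `[0,t)` and `g` on `[t,2t]`, starting at `x₀`. -/
def IsSwitchTraj {n : ℕ} (f g : Euc n → Euc n) (t : ℝ) (x₀ : Euc n) (x : ℝ → Euc n) : Prop :=
  x 0 = x₀ ∧ ContinuousOn x (Icc 0 (2 * t)) ∧
    (∀ s ∈ Ioo (0 : ℝ) t, HasDerivAt x (f (x s)) s) ∧
    (∀ s ∈ Ioo t (2 * t), HasDerivAt x (g (x s)) s)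

/-- Piecewise continuity: on every bounded interval, continuity off a finite set. -/
def PiecewiseContinuous {m : ℕ} (a : ℝ → Euc m) : Prop :=
  ∀ T > (0 : ℝ), ∃ D : Finset ℝ, ∀ t ∈ Icc (0 : ℝ) T, t ∉ D → ContinuousAt a t

/-- Admissible control with values in the control set `A`. -/
def IsControl {m : ℕ} (A : Set (Euc m)) (a : ℝ → Euc m) : Prop :=
  (∀ s, a s ∈ A) ∧ PiecewiseContinuous a

/-- Carathéodory trajectory of the control system `ẋ = f(x,a)`. -/
def IsTraj {n m : ℕ} (f : Euc n → Euc m → Euc n) (A : Set (Euc m))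
    (a : ℝ → Euc m) (x : ℝ → Euc n) : Prop :=
  IsControl A a ∧ ContinuousOn x (Ici 0) ∧
    ∀ t : ℝ, 0 ≤ t → x t = x 0 + ∫ s in (0 : ℝ)..t, f (x s) (a s)

/-- Points from which the target `𝒯` can be reached within time `t`. -/
def ReachSet {n m : ℕ} (f : Euc n → Euc m → Euc n) (A : Set (Euc m)) (𝒯 : Set (Euc n))
    (t : ℝ) : Set (Euc n) :=
  {x₀ | ∃ (a : ℝ → Euc m) (x : ℝ → Euc n) (t' : ℝ),
    IsTraj f A a x ∧ x 0 = x₀ ∧ 0 ≤ t' ∧ t' ≤ t ∧ x t' ∈ 𝒯}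

/-- Minimum time function, valued in `ℝ≥0∞`. -/
def minTime {n m : ℕ} (f : Euc n → Euc m → Euc n) (A : Set (Euc m)) (𝒯 : Set (Euc n))
    (x₀ : Euc n) : ℝ≥0∞ :=
  sInf {θ : ℝ≥0∞ | ∃ (a : ℝ → Euc m) (x : ℝ → Euc n) (t : ℝ),
    IsTraj f A a x ∧ x 0 = x₀ ∧ 0 ≤ t ∧ x t ∈ 𝒯 ∧ θ = ENNReal.ofReal t}

/-- Small time local attainability of the target `𝒯` at `xbar`. -/
def STLA {n m : ℕ} (f : Euc n → Euc m → Euc n) (A : Set (Euc m)) (𝒯 : Set (Euc n))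
    (xbar : Euc n) : Prop :=
  ∀ t > (0 : ℝ), xbar ∈ interior (ReachSet f A 𝒯 t)

/-- `C^k` controlled vector field: `C^k` in `x` with spatial derivatives jointly continuous. -/
def VFieldC {n m : ℕ} (k : ℕ) (f : Euc n → Euc m → Euc n) : Prop :=
  (∀ a, ContDiff ℝ k fun x => f x a) ∧
    ∀ i ≤ k, Continuous fun p : Euc n × Euc m => iteratedFDeriv ℝ i (fun x => f x p.2) p.1

/-- The second-order controllability expression
`-D²u(x) f(x,a₁)·f(x,a₂) - (D(f(·,a₁)+f(·,a₂))(x)(f(x,a₁)+f(x,a₂)) + [f(·,a₁),f(·,a₂)](x))·∇u(x)`. -/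
def SOexpr {n m : ℕ} (f : Euc n → Euc m → Euc n) (u : Euc n → ℝ) (x : Euc n)
    (a₁ a₂ : Euc m) : ℝ :=
  -⟪fderiv ℝ (gradient u) x (f x a₁), f x a₂⟫ -
    ⟪gradient u x,
      fderiv ℝ (fun y => f y a₁ + f y a₂) x (f x a₁ + f x a₂) +
        lieBracket (fun y => f y a₁) (fun y => f y a₂) x⟫

/-- The target is reached with a piecewise constant control with at most one switch. -/
def ReachOneSwitch {n m : ℕ} (f : Euc n → Euc m → Euc n) (A : Set (Euc m)) (𝒯 : Set (Euc n))
    (x₀ : Euc n) : Prop :=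
  ∃ a₁ ∈ A, ∃ a₂ ∈ A, ∃ ts tf : ℝ, 0 ≤ ts ∧ ts ≤ tf ∧
    ∃ x : ℝ → Euc n, IsTraj f A (fun s => if s < ts then a₁ else a₂) x ∧ x 0 = x₀ ∧ x tf ∈ 𝒯

/-- The matrix `S(x) = D(∇u σ)(x) σ(x)`, i.e. `S_{ij}(x) = ∇(∇u·σᵢ)(x)·σⱼ(x)`. -/
def Smat {n m : ℕ} (σ : Fin m → Euc n → Euc n) (u : Euc n → ℝ) (x : Euc n) :
    Matrix (Fin m) (Fin m) ℝ :=
  Matrix.of fun i j => fderiv ℝ (fun y => ⟪gradient u y, σ i y⟫) x (σ j x)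

/-- The symmetric block matrix `K = [[S*, ᵗS],[S, S*]]` built from a square matrix `S`. -/
def Kof {m : ℕ} (S : Matrix (Fin m) (Fin m) ℝ) :
    Matrix (Fin m ⊕ Fin m) (Fin m ⊕ Fin m) ℝ :=
  Matrix.fromBlocks ((2 : ℝ)⁻¹ • (S + Sᵀ)) Sᵀ S ((2 : ℝ)⁻¹ • (S + Sᵀ))

/-- The matrix `K(x)` associated to `σ` and `u`. -/
def Kmat {n m : ℕ} (σ : Fin m → Euc n → Euc n) (u : Euc n → ℝ) (x : Euc n) :
    Matrix (Fin m ⊕ Fin m) (Fin m ⊕ Fin m) ℝ :=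
  Kof (Smat σ u x)

/-- Symmetric system vector field `f(x,a) = σ(x) a`. -/
def symF {n m : ℕ} (σ : Fin m → Euc n → Euc n) : Euc n → Euc m → Euc n :=
  fun x a => ∑ j, a j • σ j x

/-- Nonlinear affine system vector field `f(x,a) = σ₀(x) + σ(x) a`. -/
def affF {n m : ℕ} (σ₀ : Euc n → Euc n) (σ : Fin m → Euc n → Euc n) :
    Euc n → Euc m → Euc n :=
  fun x a => σ₀ x + ∑ j, a j • σ j x

end
/-- mean value comparison -/
lemma mv_aux {n : ℕ} {h : Euc n → Euc n} (hh : ContDiff ℝ 1 h) {x₀ : Euc n} {r C : ℝ}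
    (A : Euc n →L[ℝ] Euc n)
    (hC : ∀ y ∈ closedBall x₀ r, ‖fderiv ℝ h y - A‖ ≤ C)
    {u v : Euc n} (hu : u ∈ closedBall x₀ r) (hv : v ∈ closedBall x₀ r) :
    ‖h u - h v - A (u - v)‖ ≤ C * ‖u - v‖ := by
  have hd : ∀ y ∈ closedBall x₀ r,
      HasFDerivWithinAt (fun y => h y - A y) (fderiv ℝ h y - A) (closedBall x₀ r) y := by
    intro y _
    exact (((hh.differentiable one_ne_zero) y).hasFDerivAt.sub A.hasFDerivAt).hasFDerivWithinAt
  have := Convex.norm_image_sub_le_of_norm_hasFDerivWithin_le hd hC (convex_closedBall x₀ r) hv hu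
  calc ‖h u - h v - A (u - v)‖ = ‖(h u - A u) - (h v - A v)‖ := by rw [_root_.map_sub]; abel_nf
    _ ≤ C * ‖u - v‖ := this

lemma leg_int_eq {n : ℕ} {h : Euc n → Euc n} (hc : Continuous h)
    {x : ℝ → Euc n} {a b : ℝ}
    (hx : ContinuousOn x (Icc a b))
    (hd : ∀ s ∈ Ioo a b, HasDerivAt x (h (x s)) s) :
    ∀ s ∈ Icc a b, x s - x a = ∫ τ in a..s, h (x τ) := by
  intro s hs
  have hsub : Icc a s ⊆ Icc a b := Icc_subset_Icc le_rfl hs.2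
  have hxs : ContinuousOn x (Icc a s) := hx.mono hsub
  have hint : IntervalIntegrable (fun τ => h (x τ)) MeasureTheory.volume a s := by
    apply ContinuousOn.intervalIntegrable
    rw [uIcc_of_le hs.1]
    exact hc.comp_continuousOn hxs
  rw [intervalIntegral.integral_eq_sub_of_hasDeriv_right_of_le hs.1 hxs
    (fun τ hτ => (hd τ ⟨hτ.1, lt_of_lt_of_le hτ.2 hs.2⟩).hasDerivWithinAt) hint]
lemma stay {n : ℕ} {h : Euc n → Euc n} {x : ℝ → Euc n} {a b : ℝ} (hab : a ≤ b)
    (hx : ContinuousOn x (Icc a b))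
    (hint : ∀ s ∈ Icc a b, x s - x a = ∫ τ in a..s, h (x τ))
    {x₀ : Euc n} {r M : ℝ} (hr : 0 < r) (hM0 : 0 ≤ M)
    (hMb : ∀ y ∈ closedBall x₀ r, ‖h y‖ ≤ M)
    (hxa : ‖x a - x₀‖ ≤ r / 4) (hlen : M * (b - a) ≤ r / 4) :
    ∀ s ∈ Icc a b, x s ∈ closedBall x₀ r ∧ ‖x s - x a‖ ≤ M * (s - a) := by
  set B : Set ℝ := {s | s ∈ Icc a b ∧ ∀ τ ∈ Icc a s, x τ ∈ closedBall x₀ r} with hB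
  -- norm bound for members of B
  have bound : ∀ s ∈ B, ‖x s - x a‖ ≤ M * (s - a) := by
    intro s hsB
    rw [hint s hsB.1]
    have : ‖∫ τ in a..s, h (x τ)‖ ≤ M * |s - a| := by
      apply intervalIntegral.norm_integral_le_of_norm_le_const
      intro τ hτ
      rw [uIoc_of_le hsB.1.1] at hτ
      exact hMb _ (hsB.2 τ ⟨hτ.1.le, hτ.2⟩)
    rwa [abs_of_nonneg (sub_nonneg.2 hsB.1.1)] at this
  have haB : a ∈ B := by
    refine ⟨⟨le_rfl, hab⟩, ?_⟩
    intro τ hτ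
    have : τ = a := le_antisymm hτ.2 hτ.1
    rw [this, mem_closedBall, dist_eq_norm]
    linarith
  have hBbdd : BddAbove B := ⟨b, fun s hs => hs.1.2⟩
  have hne : B.Nonempty := ⟨a, haB⟩
  set T := sSup B with hT
  have haT : a ≤ T := le_csSup hBbdd haB
  have hTb : T ≤ b := csSup_le hne (fun s hs => hs.1.2)
  have hTIcc : T ∈ Icc a b := ⟨haT, hTb⟩
  -- half-ball bound for members of B
  have half : ∀ s ∈ B, x s ∈ closedBall x₀ (r / 2) := by
    intro s hs
    rw [mem_closedBall, dist_eq_norm]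
    have h1 := bound s hs
    have h2 : M * (s - a) ≤ r / 4 := by
      have : M * (s - a) ≤ M * (b - a) := by
        apply mul_le_mul_of_nonneg_left _ hM0; linarith [hs.1.2]
      linarith
    calc ‖x s - x₀‖ ≤ ‖x s - x a‖ + ‖x a - x₀‖ := norm_sub_le_norm_sub_add_norm_sub _ _ _
      _ ≤ r / 4 + r / 4 := by linarith
      _ = r / 2 := by ring
  have hTB : T ∈ B := by
    refine ⟨hTIcc, ?_⟩
    intro τ hτ
    rcases lt_or_eq_of_le hτ.2 with hlt | heq
    · obtain ⟨s, hsB, hs⟩ := exists_lt_of_lt_csSup hne hlt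
      exact hsB.2 τ ⟨hτ.1, hs.le⟩
    · -- τ = T; take limit from the left if a < T
      rcases eq_or_lt_of_le hτ.1 with heq2 | hlt2
      · rw [← heq2]; rw [mem_closedBall, dist_eq_norm]; linarith
      · have hne2 : (𝓝[Ico a τ] τ).NeBot := right_nhdsWithin_Ico_neBot hlt2
        have hsubτ : Ico a τ ⊆ Icc a b := fun σ hσ =>
          ⟨hσ.1, hσ.2.le.trans (hτ.2.trans hTb)⟩
        have htend : Tendsto x (𝓝[Ico a τ] τ) (𝓝 (x τ)) := by
          have h1 : ContinuousWithinAt x (Icc a b) τ := hx τ ⟨hτ.1, hτ.2.trans hTb⟩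
          exact h1.mono hsubτ
        refine IsClosed.mem_of_tendsto Metric.isClosed_closedBall htend ?_
        filter_upwards [self_mem_nhdsWithin] with σ hσ
        have hσT : σ < T := hσ.2.trans_le hτ.2
        obtain ⟨s, hsB, hs⟩ := exists_lt_of_lt_csSup hne hσT
        exact hsB.2 σ ⟨hσ.1, hs.le⟩
  have hTeq : T = b := by
    by_contra hne'
    have hTlt : T < b := lt_of_le_of_ne hTb hne'
    have hxT : x T ∈ closedBall x₀ (r / 2) := half T hTB
    have hcw : ContinuousWithinAt x (Icc a b) T := hx T hTIcc
    rw [Metric.continuousWithinAt_iff] at hcw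
    obtain ⟨η, hη, hball⟩ := hcw (r / 2) (by linarith)
    set b' := min b (T + η / 2) with hb'
    have hTb' : T < b' := lt_min hTlt (by linarith)
    have hb'B : b' ∈ B := by
      refine ⟨⟨haT.trans hTb'.le, min_le_left _ _⟩, ?_⟩
      intro τ hτ
      rcases le_or_gt τ T with hle | hgt
      · exact hTB.2 τ ⟨hτ.1, hle⟩
      · have hτIcc : τ ∈ Icc a b := ⟨hτ.1, hτ.2.trans (min_le_left _ _)⟩
        have hdist : dist τ T < η := by
          rw [Real.dist_eq, abs_of_pos (sub_pos.2 hgt)]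
          have h1 : τ ≤ T + η / 2 := hτ.2.trans (min_le_right _ _)
          linarith
        have := hball hτIcc hdist
        rw [mem_closedBall]
        calc dist (x τ) x₀ ≤ dist (x τ) (x T) + dist (x T) x₀ := dist_triangle _ _ _
          _ ≤ r / 2 + r / 2 := add_le_add this.le hxT
          _ = r := by ring
    exact absurd (le_csSup hBbdd hb'B) (not_le.2 hTb')
  intro s hs
  have hsB : s ∈ B := ⟨hs, fun τ hτ => hTB.2 τ ⟨hτ.1, hτ.2.trans (hTeq ▸ hs.2)⟩⟩
  exact ⟨hsB.2 s ⟨hs.1, le_rfl⟩, bound s hsB⟩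
lemma leg_rho {n : ℕ} {h : Euc n → Euc n} (hc : Continuous h) {x : ℝ → Euc n} {a b : ℝ}
    {x₀ : Euc n} {r M L : ℝ} (hM0 : 0 ≤ M) (hL0 : 0 ≤ L)
    (hx : ContinuousOn x (Icc a b))
    (hint : ∀ s ∈ Icc a b, x s - x a = ∫ τ in a..s, h (x τ))
    (hlip : ∀ u ∈ closedBall x₀ r, ∀ v ∈ closedBall x₀ r, ‖h u - h v‖ ≤ L * ‖u - v‖)
    (hball : ∀ s ∈ Icc a b, x s ∈ closedBall x₀ r)
    (hbd : ∀ s ∈ Icc a b, ‖x s - x a‖ ≤ M * (s - a)) :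
    ∀ s ∈ Icc a b, ‖x s - x a - (s - a) • h (x a)‖ ≤ L * M * (s - a) ^ 2 := by
  intro s hs
  have ha : a ∈ Icc a b := ⟨le_rfl, hs.1.trans hs.2⟩
  have hxs : ContinuousOn x (Icc a s) := hx.mono (Icc_subset_Icc le_rfl hs.2)
  have hi1 : IntervalIntegrable (fun τ => h (x τ)) MeasureTheory.volume a s := by
    apply ContinuousOn.intervalIntegrable
    rw [uIcc_of_le hs.1]
    exact hc.comp_continuousOn hxs
  have hi2 : IntervalIntegrable (fun _ : ℝ => h (x a)) MeasureTheory.volume a s :=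
    intervalIntegrable_const
  have key : x s - x a - (s - a) • h (x a) = ∫ τ in a..s, (h (x τ) - h (x a)) := by
    rw [intervalIntegral.integral_sub hi1 hi2, intervalIntegral.integral_const,
      ← hint s hs]
  rw [key]
  have hb : ‖∫ τ in a..s, (h (x τ) - h (x a))‖ ≤ (L * M * (s - a)) * |s - a| := by
    apply intervalIntegral.norm_integral_le_of_norm_le_const
    intro τ hτ
    rw [uIoc_of_le hs.1] at hτ
    have hτI : τ ∈ Icc a b := ⟨hτ.1.le, hτ.2.trans hs.2⟩
    calc ‖h (x τ) - h (x a)‖ ≤ L * ‖x τ - x a‖ := hlip _ (hball τ hτI) _ (hball a ha)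
      _ ≤ L * (M * (τ - a)) := mul_le_mul_of_nonneg_left (hbd τ hτI) hL0
      _ = L * M * (τ - a) := by ring
      _ ≤ L * M * (s - a) := mul_le_mul_of_nonneg_left (by linarith [hτ.2]) (mul_nonneg hL0 hM0)
  rw [abs_of_nonneg (sub_nonneg.2 hs.1)] at hb
  calc ‖_‖ ≤ L * M * (s - a) * (s - a) := hb
    _ = L * M * (s - a) ^ 2 := by ring

lemma leg_expand {n : ℕ} {h : Euc n → Euc n} (hc : Continuous h) {x : ℝ → Euc n} {a b : ℝ}
    (hab : a ≤ b)
    {x₀ : Euc n} {r M L ε : ℝ} (hM0 : 0 ≤ M) (hL0 : 0 ≤ L) (hε0 : 0 ≤ ε)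
    (A : Euc n →L[ℝ] Euc n) (hA : ‖A‖ ≤ L)
    (hx : ContinuousOn x (Icc a b))
    (hint : ∀ s ∈ Icc a b, x s - x a = ∫ τ in a..s, h (x τ))
    (hlip : ∀ u ∈ closedBall x₀ r, ∀ v ∈ closedBall x₀ r, ‖h u - h v‖ ≤ L * ‖u - v‖)
    (hmv : ∀ u ∈ closedBall x₀ r, ∀ v ∈ closedBall x₀ r,
      ‖h u - h v - A (u - v)‖ ≤ ε * ‖u - v‖)
    (hball : ∀ s ∈ Icc a b, x s ∈ closedBall x₀ r)
    (hbd : ∀ s ∈ Icc a b, ‖x s - x a‖ ≤ M * (s - a)) :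
    ‖x b - x a - (b - a) • h (x a) - ((b - a) ^ 2 / 2) • A (h (x a))‖
      ≤ ε * M * (b - a) ^ 2 + L ^ 2 * M * (b - a) ^ 3 := by
  have ha : a ∈ Icc a b := ⟨le_rfl, hab⟩
  have hbI : b ∈ Icc a b := ⟨hab, le_rfl⟩
  have hi1 : IntervalIntegrable (fun τ => h (x τ)) MeasureTheory.volume a b := by
    apply ContinuousOn.intervalIntegrable
    rw [uIcc_of_le hab]
    exact hc.comp_continuousOn hx
  have hi2 : IntervalIntegrable (fun _ : ℝ => h (x a)) MeasureTheory.volume a b :=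
    intervalIntegrable_const
  set c : Euc n := A (h (x a)) with hcdef
  have hi3 : IntervalIntegrable (fun τ : ℝ => (τ - a) • c) MeasureTheory.volume a b :=
    ((continuous_id.sub continuous_const).smul continuous_const).intervalIntegrable a b
  have hval : (∫ τ in a..b, (τ - a) • c) = ((b - a) ^ 2 / 2) • c := by
    rw [intervalIntegral.integral_smul_const]
    congr 1
    rw [intervalIntegral.integral_comp_sub_right (fun τ : ℝ => τ) a, integral_id]
    ring
  have key : x b - x a - (b - a) • h (x a) - ((b - a) ^ 2 / 2) • c
      = ∫ τ in a..b, (h (x τ) - h (x a) - (τ - a) • c) := by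
    rw [intervalIntegral.integral_sub (hi1.sub hi2) hi3,
      intervalIntegral.integral_sub hi1 hi2, intervalIntegral.integral_const,
      ← hint b hbI, hval]
  rw [key]
  have hb2 : ‖∫ τ in a..b, (h (x τ) - h (x a) - (τ - a) • c)‖
      ≤ (ε * M * (b - a) + L ^ 2 * M * (b - a) ^ 2) * |b - a| := by
    apply intervalIntegral.norm_integral_le_of_norm_le_const
    intro τ hτ
    rw [uIoc_of_le hab] at hτ
    have hτI : τ ∈ Icc a b := ⟨hτ.1.le, hτ.2⟩
    have hdecomp : h (x τ) - h (x a) - (τ - a) • c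
        = (h (x τ) - h (x a) - A (x τ - x a)) + A (x τ - x a - (τ - a) • h (x a)) := by
      simp only [hcdef, _root_.map_sub, _root_.map_smul]
      abel
    rw [hdecomp]
    have h1 : ‖h (x τ) - h (x a) - A (x τ - x a)‖ ≤ ε * (M * (τ - a)) := by
      calc ‖h (x τ) - h (x a) - A (x τ - x a)‖ ≤ ε * ‖x τ - x a‖ :=
            hmv _ (hball τ hτI) _ (hball a ha)
        _ ≤ ε * (M * (τ - a)) := mul_le_mul_of_nonneg_left (hbd τ hτI) hε0
    have h2 : ‖A (x τ - x a - (τ - a) • h (x a))‖ ≤ L * (L * M * (τ - a) ^ 2) := by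
      calc ‖A (x τ - x a - (τ - a) • h (x a))‖ ≤ ‖A‖ * ‖x τ - x a - (τ - a) • h (x a)‖ :=
            A.le_opNorm _
        _ ≤ L * (L * M * (τ - a) ^ 2) := by
            apply mul_le_mul hA
              (leg_rho hc hM0 hL0 hx hint hlip hball hbd τ hτI) (norm_nonneg _) hL0
    have hτa : τ - a ≤ b - a := by linarith [hτ.2]
    have hτa0 : 0 ≤ τ - a := by linarith [hτ.1.le]
    calc ‖_ + _‖ ≤ ε * (M * (τ - a)) + L * (L * M * (τ - a) ^ 2) :=
          (norm_add_le _ _).trans (add_le_add h1 h2)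
      _ ≤ ε * M * (b - a) + L ^ 2 * M * (b - a) ^ 2 := by
          have e1 : (ε * M) * (τ - a) ≤ (ε * M) * (b - a) :=
            mul_le_mul_of_nonneg_left hτa (mul_nonneg hε0 hM0)
          have e2 : (τ - a) ^ 2 ≤ (b - a) ^ 2 := pow_le_pow_left₀ hτa0 hτa 2
          have e3 : (L ^ 2 * M) * (τ - a) ^ 2 ≤ (L ^ 2 * M) * (b - a) ^ 2 :=
            mul_le_mul_of_nonneg_left e2 (mul_nonneg (sq_nonneg L) hM0)
          nlinarith [e1, e3]
  rw [abs_of_nonneg (sub_nonneg.2 hab)] at hb2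
  calc ‖_‖ ≤ (ε * M * (b - a) + L ^ 2 * M * (b - a) ^ 2) * (b - a) := hb2
    _ = ε * M * (b - a) ^ 2 + L ^ 2 * M * (b - a) ^ 3 := by ring

set_option maxHeartbeats 1000000 in
/-- Proposition 1: second order Taylor expansion of a single-switch
trajectory: `x_{2t} - x₀ = (f(x₀)+g(x₀)) t + (D(f+g)(x₀)(f(x₀)+g(x₀)) + [f,g](x₀)) t²/2 + o(t²)`
as `t → 0⁺`. -/
theorem statement0 {n : ℕ} (f g : Euc n → Euc n)
    (hf : ContDiff ℝ 1 f) (hg : ContDiff ℝ 1 g) (x₀ : Euc n)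
    (X : ℝ → ℝ → Euc n) (hX : ∀ t > (0 : ℝ), IsSwitchTraj f g t x₀ (X t)) :
    (fun t : ℝ => X t (2 * t) - x₀ - t • (f x₀ + g x₀) -
        (t ^ 2 / 2) • (fderiv ℝ (fun y => f y + g y) x₀ (f x₀ + g x₀) + lieBracket f g x₀))
      =o[𝓝[>] (0 : ℝ)] fun t => t ^ 2 := by
  have hdf : DifferentiableAt ℝ f x₀ := (hf.differentiable one_ne_zero) x₀
  have hdg : DifferentiableAt ℝ g x₀ := (hg.differentiable one_ne_zero) x₀
  set F := fderiv ℝ f x₀ with hFdef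
  set G := fderiv ℝ g x₀ with hGdef
  have htarget : fderiv ℝ (fun y => f y + g y) x₀ (f x₀ + g x₀) + lieBracket f g x₀
      = F (f x₀) + (2 : ℝ) • G (f x₀) + G (g x₀) := by
    rw [fderiv_fun_add hdf hdg]
    simp only [lieBracket, ContinuousLinearMap.add_apply, _root_.map_add, ← hFdef, ← hGdef]
    module
  rw [Asymptotics.isLittleO_iff]
  intro c hc
  -- global constants on the unit ball
  obtain ⟨Mf, hMf⟩ := (isCompact_closedBall x₀ 1).exists_bound_of_continuousOn
    hf.continuous.continuousOn
  obtain ⟨Mg, hMg⟩ := (isCompact_closedBall x₀ 1).exists_bound_of_continuousOn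
    hg.continuous.continuousOn
  obtain ⟨Lf, hLf⟩ := (isCompact_closedBall x₀ 1).exists_bound_of_continuousOn
    (hf.continuous_fderiv one_ne_zero).continuousOn
  obtain ⟨Lg, hLg⟩ := (isCompact_closedBall x₀ 1).exists_bound_of_continuousOn
    (hg.continuous_fderiv one_ne_zero).continuousOn
  set M := max 1 (max Mf Mg) with hMdef
  set L := max 1 (max Lf Lg) with hLdef
  have hM1 : (1 : ℝ) ≤ M := le_max_left _ _
  have hM0 : (0 : ℝ) < M := lt_of_lt_of_le one_pos hM1
  have hL1 : (1 : ℝ) ≤ L := le_max_left _ _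
  have hL0 : (0 : ℝ) < L := lt_of_lt_of_le one_pos hL1
  have hMb : ∀ y ∈ closedBall x₀ 1, ‖f y‖ ≤ M ∧ ‖g y‖ ≤ M := fun y hy =>
    ⟨(hMf y hy).trans ((le_max_left _ _).trans (le_max_right _ _)),
     (hMg y hy).trans ((le_max_right _ _).trans (le_max_right _ _))⟩
  have hLb : ∀ y ∈ closedBall x₀ 1, ‖fderiv ℝ f y‖ ≤ L ∧ ‖fderiv ℝ g y‖ ≤ L := fun y hy =>
    ⟨(hLf y hy).trans ((le_max_left _ _).trans (le_max_right _ _)),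
     (hLg y hy).trans ((le_max_right _ _).trans (le_max_right _ _))⟩
  set ε := c / (6 * M) with hεdef
  have hε0 : 0 < ε := div_pos hc (by linarith)
  -- δ from continuity of the derivatives at x₀
  have hcf := (hf.continuous_fderiv one_ne_zero).continuousAt (x := x₀)
  have hcg := (hg.continuous_fderiv one_ne_zero).continuousAt (x := x₀)
  rw [Metric.continuousAt_iff] at hcf hcg
  obtain ⟨δ₁, hδ₁, hf'⟩ := hcf ε hε0
  obtain ⟨δ₂, hδ₂, hg'⟩ := hcg ε hε0
  set δ := min 1 (min (δ₁ / 2) (δ₂ / 2)) with hδdef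
  have hδ0 : 0 < δ := lt_min one_pos (lt_min (by linarith) (by linarith))
  have hδ1 : δ ≤ 1 := min_le_left _ _
  have hsub : closedBall x₀ δ ⊆ closedBall x₀ 1 := closedBall_subset_closedBall hδ1
  have hεf : ∀ y ∈ closedBall x₀ δ, ‖fderiv ℝ f y - F‖ ≤ ε := by
    intro y hy
    rw [mem_closedBall] at hy
    have h1 : dist y x₀ < δ₁ :=
      lt_of_le_of_lt (hy.trans ((min_le_right _ _).trans (min_le_left _ _))) (by linarith)
    have := hf' h1
    rw [dist_eq_norm] at this
    exact this.le
  have hεg : ∀ y ∈ closedBall x₀ δ, ‖fderiv ℝ g y - G‖ ≤ ε := by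
    intro y hy
    rw [mem_closedBall] at hy
    have h1 : dist y x₀ < δ₂ :=
      lt_of_le_of_lt (hy.trans ((min_le_right _ _).trans (min_le_right _ _))) (by linarith)
    have := hg' h1
    rw [dist_eq_norm] at this
    exact this.le
  -- two-point estimates on the δ-ball
  have hlipf : ∀ u ∈ closedBall x₀ δ, ∀ v ∈ closedBall x₀ δ, ‖f u - f v‖ ≤ L * ‖u - v‖ := by
    intro u hu v hv
    have := mv_aux hf (0 : Euc n →L[ℝ] Euc n)
      (fun y hy => by rw [sub_zero]; exact (hLb y (hsub hy)).1) hu hv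
    simpa only [ContinuousLinearMap.zero_apply, sub_zero] using this
  have hlipg : ∀ u ∈ closedBall x₀ δ, ∀ v ∈ closedBall x₀ δ, ‖g u - g v‖ ≤ L * ‖u - v‖ := by
    intro u hu v hv
    have := mv_aux hg (0 : Euc n →L[ℝ] Euc n)
      (fun y hy => by rw [sub_zero]; exact (hLb y (hsub hy)).2) hu hv
    simpa only [ContinuousLinearMap.zero_apply, sub_zero] using this
  have hmvf : ∀ u ∈ closedBall x₀ δ, ∀ v ∈ closedBall x₀ δ,
      ‖f u - f v - F (u - v)‖ ≤ ε * ‖u - v‖ := fun u hu v hv => mv_aux hf F hεf hu hv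
  have hmvg : ∀ u ∈ closedBall x₀ δ, ∀ v ∈ closedBall x₀ δ,
      ‖g u - g v - G (u - v)‖ ≤ ε * ‖u - v‖ := fun u hu v hv => mv_aux hg G hεg hu hv
  have hc0 : x₀ ∈ closedBall x₀ δ := mem_closedBall_self hδ0.le
  have hFL : ‖F‖ ≤ L := (hLb x₀ (mem_closedBall_self one_pos.le)).1
  have hGL : ‖G‖ ≤ L := (hLb x₀ (mem_closedBall_self one_pos.le)).2
  -- the time horizon
  set tb := min (δ / (4 * M)) (min (c / (8 * L ^ 2 * M)) 1) with htbdef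
  have htb0 : 0 < tb := by
    apply lt_min (by positivity) (lt_min (by positivity) one_pos)
  filter_upwards [Ioo_mem_nhdsGT_of_mem (left_mem_Ico.2 htb0)] with t htI
  obtain ⟨ht0, httb⟩ := htI
  obtain ⟨h0, hcont, hd1, hd2⟩ := hX t ht0
  have ht4M : M * t ≤ δ / 4 := by
    have h1 : t ≤ δ / (4 * M) := httb.le.trans (min_le_left _ _)
    have := mul_le_mul_of_nonneg_left h1 hM0.le
    calc M * t ≤ M * (δ / (4 * M)) := this
      _ = δ / 4 := by field_simp
  have htc : 4 * L ^ 2 * M * t ≤ c / 2 := by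
    have h1 : t ≤ c / (8 * L ^ 2 * M) := httb.le.trans ((min_le_right _ _).trans (min_le_left _ _))
    have h2 : (0:ℝ) < 8 * L ^ 2 * M := by positivity
    have := mul_le_mul_of_nonneg_left h1 (by positivity : (0:ℝ) ≤ 4 * L ^ 2 * M)
    calc 4 * L ^ 2 * M * t ≤ 4 * L ^ 2 * M * (c / (8 * L ^ 2 * M)) := this
      _ = c / 2 := by field_simp; ring
  -- leg 1
  have hx1 : ContinuousOn (X t) (Icc 0 t) := hcont.mono (Icc_subset_Icc le_rfl (by linarith))
  have hint1 := leg_int_eq hf.continuous hx1 hd1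
  have stay1 := stay ht0.le hx1 hint1 hδ0 hM0.le (fun y hy => (hMb y (hsub hy)).1)
    (by rw [h0, sub_self, norm_zero]; positivity) (by linarith)
  have hball1 : ∀ s ∈ Icc 0 t, X t s ∈ closedBall x₀ δ := fun s hs => (stay1 s hs).1
  have hbd1 : ∀ s ∈ Icc 0 t, ‖X t s - X t 0‖ ≤ M * (s - 0) := fun s hs => (stay1 s hs).2
  have e1 := leg_expand hf.continuous ht0.le hM0.le hL0.le hε0.le F hFL hx1 hint1
    hlipf hmvf hball1 hbd1
  have rho1 := leg_rho hf.continuous hM0.le hL0.le hx1 hint1 hlipf hball1 hbd1 t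
    ⟨ht0.le, le_rfl⟩
  rw [h0] at e1 rho1
  simp only [sub_zero] at e1 rho1
  have hxt : ‖X t t - x₀‖ ≤ M * t := by
    have := hbd1 t ⟨ht0.le, le_rfl⟩
    rw [h0, sub_zero] at this
    exact this
  -- leg 2
  have hx2 : ContinuousOn (X t) (Icc t (2 * t)) :=
    hcont.mono (Icc_subset_Icc (by linarith) le_rfl)
  have hint2 := leg_int_eq hg.continuous hx2 hd2
  have stay2 := stay (by linarith : t ≤ 2 * t) hx2 hint2 hδ0 hM0.le
    (fun y hy => (hMb y (hsub hy)).2) (by linarith) (by nlinarith)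
  have hball2 : ∀ s ∈ Icc t (2 * t), X t s ∈ closedBall x₀ δ := fun s hs => (stay2 s hs).1
  have hbd2 : ∀ s ∈ Icc t (2 * t), ‖X t s - X t t‖ ≤ M * (s - t) := fun s hs => (stay2 s hs).2
  have e2 := leg_expand hg.continuous (by linarith : t ≤ 2 * t) hM0.le hL0.le hε0.le G hGL
    hx2 hint2 hlipg hmvg hball2 hbd2
  have h2t : 2 * t - t = t := by ring
  rw [h2t] at e2
  -- remaining pieces
  have hxtb : X t t ∈ closedBall x₀ δ := hball1 t ⟨ht0.le, le_rfl⟩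
  have a3 : ‖g (X t t) - g x₀ - G (X t t - x₀)‖ ≤ ε * (M * t) :=
    (hmvg _ hxtb _ hc0).trans (mul_le_mul_of_nonneg_left hxt hε0.le)
  have a5 : ‖g (X t t) - g x₀‖ ≤ L * (M * t) :=
    (hlipg _ hxtb _ hc0).trans (mul_le_mul_of_nonneg_left hxt hL0.le)
  -- assemble
  rw [htarget]
  have key : X t (2 * t) - x₀ - t • (f x₀ + g x₀) -
      (t ^ 2 / 2) • (F (f x₀) + (2 : ℝ) • G (f x₀) + G (g x₀))
      = (X t t - x₀ - t • f x₀ - (t ^ 2 / 2) • F (f x₀))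
      + (X t (2 * t) - X t t - t • g (X t t) - (t ^ 2 / 2) • G (g (X t t)))
      + t • (g (X t t) - g x₀ - G (X t t - x₀))
      + t • (G (X t t - x₀ - t • f x₀))
      + (t ^ 2 / 2) • (G (g (X t t) - g x₀)) := by
    simp only [_root_.map_sub, _root_.map_smul, _root_.map_add]
    module
  rw [key]
  have n4 : ‖G (X t t - x₀ - t • f x₀)‖ ≤ L * (L * M * t ^ 2) :=
    (G.le_opNorm _).trans (mul_le_mul hGL rho1 (norm_nonneg _) hL0.le)
  have n5 : ‖G (g (X t t) - g x₀)‖ ≤ L * (L * (M * t)) :=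
    (G.le_opNorm _).trans (mul_le_mul hGL a5 (norm_nonneg _) hL0.le)
  have habs : |t| = t := abs_of_pos ht0
  have ht2 : ‖(t : ℝ) ^ 2‖ = t ^ 2 := by
    rw [Real.norm_eq_abs, abs_of_pos (by positivity)]
  rw [ht2]
  have hεMc : 3 * (ε * M) = c / 2 := by
    rw [hεdef]; field_simp; ring
  calc ‖_ + _ + _ + _ + _‖
      ≤ ‖(X t t - x₀ - t • f x₀ - (t ^ 2 / 2) • F (f x₀))
      + (X t (2 * t) - X t t - t • g (X t t) - (t ^ 2 / 2) • G (g (X t t)))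
      + t • (g (X t t) - g x₀ - G (X t t - x₀))
      + t • (G (X t t - x₀ - t • f x₀))‖
      + ‖(t ^ 2 / 2) • (G (g (X t t) - g x₀))‖ := norm_add_le _ _
    _ ≤ (‖(X t t - x₀ - t • f x₀ - (t ^ 2 / 2) • F (f x₀))
      + (X t (2 * t) - X t t - t • g (X t t) - (t ^ 2 / 2) • G (g (X t t)))
      + t • (g (X t t) - g x₀ - G (X t t - x₀))‖
      + ‖t • (G (X t t - x₀ - t • f x₀))‖)
      + ‖(t ^ 2 / 2) • (G (g (X t t) - g x₀))‖ := by
        gcongr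
        exact norm_add_le _ _
    _ ≤ ((‖(X t t - x₀ - t • f x₀ - (t ^ 2 / 2) • F (f x₀))
      + (X t (2 * t) - X t t - t • g (X t t) - (t ^ 2 / 2) • G (g (X t t)))‖
      + ‖t • (g (X t t) - g x₀ - G (X t t - x₀))‖)
      + ‖t • (G (X t t - x₀ - t • f x₀))‖)
      + ‖(t ^ 2 / 2) • (G (g (X t t) - g x₀))‖ := by
        gcongr
        exact norm_add_le _ _
    _ ≤ (((‖X t t - x₀ - t • f x₀ - (t ^ 2 / 2) • F (f x₀)‖
      + ‖X t (2 * t) - X t t - t • g (X t t) - (t ^ 2 / 2) • G (g (X t t))‖)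
      + ‖t • (g (X t t) - g x₀ - G (X t t - x₀))‖)
      + ‖t • (G (X t t - x₀ - t • f x₀))‖)
      + ‖(t ^ 2 / 2) • (G (g (X t t) - g x₀))‖ := by
        gcongr
        exact norm_add_le _ _
    _ ≤ (((((ε * M * t ^ 2 + L ^ 2 * M * t ^ 3)) + (ε * M * t ^ 2 + L ^ 2 * M * t ^ 3))
      + t * (ε * (M * t))) + t * (L * (L * M * t ^ 2))) + (t ^ 2 / 2) * (L * (L * (M * t))) := by
        gcongr ?_ + ?_ + ?_ + ?_ + ?_ <;> try first | exact e1 | exact e2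
        · rw [norm_smul, Real.norm_eq_abs, habs]
          exact mul_le_mul_of_nonneg_left a3 ht0.le
        · rw [norm_smul, Real.norm_eq_abs, habs]
          exact mul_le_mul_of_nonneg_left n4 ht0.le
        · rw [norm_smul, Real.norm_eq_abs, abs_of_pos (by positivity)]
          exact mul_le_mul_of_nonneg_left n5 (by positivity)
    _ ≤ c * t ^ 2 := by
        have ht1 : t ≤ 1 := httb.le.trans ((min_le_right _ _).trans (min_le_right _ _))
        nlinarith [sq_nonneg t, mul_pos ht0 ht0, hεMc, htc, mul_nonneg (mul_nonneg hL0.le hL0.le) hM0.le, mul_nonneg hε0.le hM0.le]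
end

section
/- Let f, g : ℝⁿ → ℝⁿ be C¹ vector fields, u ∈ C²(ℝⁿ), and x₀ ∈ ℝⁿ. For each t > 0 let x^t denote the single-switch trajectory with data (f, g, t, x₀). Then as t → 0⁺: u(x^t(2t)) − u(x₀) = ∇u(x₀)·(f+g)(x₀) t + ( H_{f+g,f+g}u(x₀) + ∇u(x₀)·[f,g](x₀) ) t²/2 + o(t²), and equivalently u(x^t(2t)) − u(x₀) = ∇u(x₀)·(f+g)(x₀) t + ( H_{f,f}u(x₀) + H_{g,g}u(x₀) + 2 H_{f,g}u(x₀) ) t²/2 + o(t²). In particular, if f ≡ g then u(x^t(2t)) − u(x₀) = 2( ∇u(x₀)·f(x₀) t + H_{f,f}u(x₀) t² ) + o(t²). -/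
open Set Filter Metric Matrix MeasureTheory Asymptotics
open scoped RealInnerProductSpace ENNReal Topology

section Helpers

open Set Filter Metric MeasureTheory Asymptotics
open scoped RealInnerProductSpace Topology

lemma ftc_gen {E : Type*} [NormedAddCommGroup E] [NormedSpace ℝ E] [CompleteSpace E]
    {φ ψ : ℝ → E} {a b : ℝ}
    (hφ : ContinuousOn φ (Icc a b)) (hψ : ContinuousOn ψ (Icc a b))
    (hd : ∀ s ∈ Ioo a b, HasDerivAt φ (ψ s) s) :
    ∀ s ∈ Icc a b, φ s = φ a + ∫ r in a..s, ψ r := by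
  intro s hs
  have hint : ∫ r in a..s, ψ r = φ s - φ a := by
    apply intervalIntegral.integral_eq_sub_of_hasDeriv_right_of_le hs.1
      (hφ.mono (Icc_subset_Icc le_rfl hs.2))
      (fun r hr => ((hd r ⟨hr.1, hr.2.trans_le hs.2⟩).hasDerivWithinAt))
    exact (hψ.mono (by rw [uIcc_of_le hs.1]; exact Icc_subset_Icc le_rfl hs.2)).intervalIntegrable
  rw [hint]; abel
lemma inner_grad_eq {n : ℕ} {u : Euc n → ℝ} {y v : Euc n} :
    ⟪gradient u y, v⟫ = fderiv ℝ u y v :=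
  InnerProductSpace.toDual_symm_apply
lemma grad_cd {n : ℕ} {u : Euc n → ℝ} (hu : ContDiff ℝ 2 u) : ContDiff ℝ 1 (gradient u) := by
  have h1 : ContDiff ℝ 1 fun y => fderiv ℝ u y := hu.fderiv_right (by norm_num)
  exact ((InnerProductSpace.toDual ℝ (Euc n)).symm.contDiff).comp h1
lemma H2_eq {n : ℕ} {u : Euc n → ℝ} (hu : ContDiff ℝ 2 u) {h k : Euc n → Euc n}
    (hk : ContDiff ℝ 1 k) (x₀ : Euc n) :
    H2 h k u x₀ = (fderiv ℝ (fderiv ℝ u) x₀ (h x₀)) (k x₀) +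
      fderiv ℝ u x₀ (fderiv ℝ k x₀ (h x₀)) := by
  have hrw : (fun y => ⟪gradient u y, k y⟫) = fun y => fderiv ℝ u y (k y) :=
    funext fun y => inner_grad_eq
  have hfd : ContDiff ℝ 1 fun y => fderiv ℝ u y := hu.fderiv_right (by norm_num)
  rw [H2, hrw, fderiv_clm_apply (hfd.differentiable one_ne_zero x₀) (hk.differentiable one_ne_zero x₀)]
  simp; ring
lemma H2_identity {n : ℕ} (f g : Euc n → Euc n) (hf : ContDiff ℝ 1 f) (hg : ContDiff ℝ 1 g)
    (u : Euc n → ℝ) (hu : ContDiff ℝ 2 u) (x₀ : Euc n) :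
    H2 (fun y => f y + g y) (fun y => f y + g y) u x₀ +
      ⟪gradient u x₀, lieBracket f g x₀⟫ =
    H2 f f u x₀ + H2 g g u x₀ + 2 * H2 f g u x₀ := by
  have hsymm : IsSymmSndFDerivAt ℝ u x₀ := hu.contDiffAt.isSymmSndFDerivAt (by simp)
  have hsum : ContDiff ℝ 1 fun y => f y + g y := hf.add hg
  have hdf := hf.differentiable one_ne_zero x₀
  have hdg := hg.differentiable one_ne_zero x₀
  rw [H2_eq hu hsum, H2_eq hu hf, H2_eq hu hg, H2_eq hu hg, inner_grad_eq, lieBracket]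
  have hfd : fderiv ℝ (fun y => f y + g y) x₀ = fderiv ℝ f x₀ + fderiv ℝ g x₀ :=
    fderiv_add hdf hdg
  rw [hfd]
  have hs := hsymm (f x₀) (g x₀)
  simp only [map_add, map_sub, ContinuousLinearMap.add_apply]
  linarith
lemma escape {n : ℕ} {f g : Euc n → Euc n} (hfc : Continuous f) (hgc : Continuous g)
    {x₀ : Euc n} {M : ℝ} (hM : 1 ≤ M)
    (hfM : ∀ y ∈ closedBall x₀ 1, ‖f y‖ ≤ M) (hgM : ∀ y ∈ closedBall x₀ 1, ‖g y‖ ≤ M)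
    {t : ℝ} (ht : 0 < t) (htM : 2 * t * M ≤ 1 / 2) {x : ℝ → Euc n} (hx0 : x 0 = x₀)
    (hc : ContinuousOn x (Icc 0 (2 * t)))
    (hd1 : ∀ s ∈ Ioo 0 t, HasDerivAt x (f (x s)) s)
    (hd2 : ∀ s ∈ Ioo t (2 * t), HasDerivAt x (g (x s)) s) :
    ∀ s ∈ Icc 0 (2 * t), ‖x s - x₀‖ ≤ M * s := by
  have ht2 : t ≤ 2 * t := by linarith
  have hIcc1 : Icc (0:ℝ) t ⊆ Icc 0 (2 * t) := Icc_subset_Icc le_rfl ht2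
  have hIcc2 : Icc t (2 * t) ⊆ Icc 0 (2 * t) := Icc_subset_Icc ht.le le_rfl
  -- integral equations
  have e1 : ∀ s ∈ Icc (0:ℝ) t, x s = x 0 + ∫ r in (0:ℝ)..s, f (x r) :=
    ftc_gen (hc.mono hIcc1) (hfc.comp_continuousOn (hc.mono hIcc1)) hd1
  have e2 : ∀ s ∈ Icc t (2 * t), x s = x t + ∫ r in t..s, g (x r) :=
    ftc_gen (hc.mono hIcc2) (hgc.comp_continuousOn (hc.mono hIcc2)) hd2
  -- conditional bound
  have bound : ∀ s ∈ Icc (0:ℝ) (2 * t), (∀ r ∈ Icc 0 s, x r ∈ closedBall x₀ 1) →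
      ‖x s - x₀‖ ≤ M * s := by
    intro s hs hball
    rcases le_or_gt s t with hst | hts
    · have := e1 s ⟨hs.1, hst⟩
      rw [this, hx0]
      have : ‖x₀ + (∫ r in (0:ℝ)..s, f (x r)) - x₀‖ = ‖∫ r in (0:ℝ)..s, f (x r)‖ := by
        congr 1; abel
      rw [this]
      have hb := intervalIntegral.norm_integral_le_of_norm_le_const (C := M)
        (f := fun r => f (x r)) (a := 0) (b := s) ?_
      · calc _ ≤ M * |s - 0| := hb
          _ = M * s := by rw [sub_zero, abs_of_nonneg hs.1]
      · intro r hr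
        rw [uIoc_of_le hs.1] at hr
        exact hfM _ (hball r ⟨hr.1.le, hr.2⟩)
    · have hxt : ‖x t - x₀‖ ≤ M * t := by
        have := e1 t ⟨ht.le, le_rfl⟩
        rw [this, hx0]
        have heq : ‖x₀ + (∫ r in (0:ℝ)..t, f (x r)) - x₀‖ = ‖∫ r in (0:ℝ)..t, f (x r)‖ := by
          congr 1; abel
        rw [heq]
        have hb := intervalIntegral.norm_integral_le_of_norm_le_const (C := M)
          (f := fun r => f (x r)) (a := 0) (b := t) ?_
        · calc _ ≤ M * |t - 0| := hb
            _ = M * t := by rw [sub_zero, abs_of_nonneg ht.le]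
        · intro r hr
          rw [uIoc_of_le ht.le] at hr
          exact hfM _ (hball r ⟨hr.1.le, hr.2.trans hts.le⟩)
      have := e2 s ⟨hts.le, hs.2⟩
      rw [this]
      have heq : x t + (∫ r in t..s, g (x r)) - x₀ = (x t - x₀) + ∫ r in t..s, g (x r) := by abel
      rw [heq]
      have hb := intervalIntegral.norm_integral_le_of_norm_le_const (C := M)
        (f := fun r => g (x r)) (a := t) (b := s) ?_
      · calc ‖(x t - x₀) + ∫ r in t..s, g (x r)‖ ≤ ‖x t - x₀‖ + ‖∫ r in t..s, g (x r)‖ :=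
            norm_add_le _ _
          _ ≤ M * t + M * |s - t| := add_le_add hxt hb
          _ = M * s := by rw [abs_of_nonneg (by linarith)]; ring
      · intro r hr
        rw [uIoc_of_le hts.le] at hr
        exact hgM _ (hball r ⟨ht.le.trans hr.1.le, hr.2⟩)
  -- the supremum argument
  set S : Set ℝ := {s ∈ Icc (0:ℝ) (2 * t) | ∀ r ∈ Icc 0 s, ‖x r - x₀‖ ≤ M * r} with hS
  have h0S : (0:ℝ) ∈ S := by
    refine ⟨⟨le_rfl, by linarith⟩, fun r hr => ?_⟩
    have : r = 0 := le_antisymm hr.2 hr.1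
    simp [this, hx0]
  have hSb : BddAbove S := BddAbove.mono (fun s hs => hs.1) (bddAbove_Icc)
  set T := sSup S with hT
  have hT0 : 0 ≤ T := le_csSup hSb h0S
  have hT2t : T ≤ 2 * t := csSup_le ⟨0, h0S⟩ fun s hs => hs.1.2
  have hTlt : ∀ r, 0 ≤ r → r < T → ‖x r - x₀‖ ≤ M * r := by
    intro r hr0 hrT
    obtain ⟨s, hsS, hrs⟩ := exists_lt_of_lt_csSup ⟨0, h0S⟩ hrT
    exact hsS.2 r ⟨hr0, hrs.le⟩
  have hTbd : ‖x T - x₀‖ ≤ M * T := by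
    rcases eq_or_lt_of_le hT0 with h0 | h0
    · simp [← h0, hx0]
    · have hcw : ContinuousWithinAt (fun r => ‖x r - x₀‖) (Ico 0 T) T := by
        apply ContinuousWithinAt.mono _ (Ico_subset_Icc_self.trans (Icc_subset_Icc le_rfl hT2t))
        exact ((hc T ⟨hT0, hT2t⟩).sub continuousWithinAt_const).norm
      have hne : (𝓝[Ico (0:ℝ) T] T).NeBot := by
        rw [← mem_closure_iff_nhdsWithin_neBot, closure_Ico h0.ne]
        exact ⟨hT0, le_rfl⟩
      refine le_of_tendsto_of_tendsto hcw
        (Tendsto.mono_left ((continuous_const.mul continuous_id).tendsto T) nhdsWithin_le_nhds) ?_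
      filter_upwards [self_mem_nhdsWithin] with r hr
      exact hTlt r hr.1 hr.2
  have hTS : T ∈ S := by
    refine ⟨⟨hT0, hT2t⟩, fun r hr => ?_⟩
    rcases lt_or_eq_of_le hr.2 with h | h
    · exact hTlt r hr.1 h
    · rw [h]; exact hTbd
  have hTeq : T = 2 * t := by
    by_contra hne
    have hTlt2t : T < 2 * t := lt_of_le_of_ne hT2t hne
    -- continuity at T
    have hcw : ContinuousWithinAt x (Icc 0 (2 * t)) T := hc T ⟨hT0, hT2t⟩
    rw [Metric.continuousWithinAt_iff] at hcw
    obtain ⟨δ, hδ, hδc⟩ := hcw (1/4) (by norm_num)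
    set s₁ := min (T + δ / 2) (2 * t) with hs₁
    have hTs₁ : T < s₁ := lt_min (by linarith) hTlt2t
    have hs₁2t : s₁ ≤ 2 * t := min_le_right _ _
    have hs₁0 : 0 ≤ s₁ := hT0.trans hTs₁.le
    have hxT : ‖x T - x₀‖ ≤ 1 / 2 := by
      calc ‖x T - x₀‖ ≤ M * T := hTbd
        _ ≤ M * (2 * t) := by nlinarith
        _ ≤ 1 / 2 := by nlinarith
    have hball : ∀ r ∈ Icc (0:ℝ) s₁, x r ∈ closedBall x₀ 1 := by
      intro r hr
      rcases le_or_gt r T with hrT | hrT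
      · have := hTS.2 r ⟨hr.1, hrT⟩
        rw [mem_closedBall, dist_eq_norm]
        calc ‖x r - x₀‖ ≤ M * r := this
          _ ≤ M * (2 * t) := by nlinarith
          _ ≤ 1 := by linarith
      · have hrIcc : r ∈ Icc (0:ℝ) (2 * t) := ⟨hr.1, hr.2.trans hs₁2t⟩
        have hdist : dist r T < δ := by
          rw [Real.dist_eq, abs_of_nonneg (by linarith)]
          have : r ≤ T + δ / 2 := hr.2.trans (min_le_left _ _)
          linarith
        have := hδc hrIcc hdist
        rw [mem_closedBall, dist_eq_norm]
        calc ‖x r - x₀‖ ≤ ‖x r - x T‖ + ‖x T - x₀‖ := norm_sub_le_norm_sub_add_norm_sub _ _ _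
          _ ≤ 1/4 + 1/2 := add_le_add (by rw [← dist_eq_norm]; exact this.le) hxT
          _ ≤ 1 := by norm_num
    have hs₁S : s₁ ∈ S := by
      refine ⟨⟨hs₁0, hs₁2t⟩, fun r hr => ?_⟩
      exact bound r ⟨hr.1, hr.2.trans hs₁2t⟩ fun r' hr' =>
        hball r' ⟨hr'.1, hr'.2.trans hr.2⟩
    exact absurd (le_csSup hSb hs₁S) (not_le.mpr hTs₁)
  intro s hs
  rw [← hTeq] at hs
  exact hTS.2 s hs
lemma int_affine (a b cc d : ℝ) :
    ∫ s in a..b, (cc + d * s) = cc * (b - a) + d * ((b ^ 2 - a ^ 2) / 2) := by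
  have h1 : IntervalIntegrable (fun s : ℝ => d * s) volume a b :=
    (continuous_const.mul continuous_id).intervalIntegrable _ _
  rw [intervalIntegral.integral_add intervalIntegrable_const h1,
    intervalIntegral.integral_const, intervalIntegral.integral_const_mul, integral_id]
  simp [smul_eq_mul]; ring

lemma contOn_intInt {E : Type*} [NormedAddCommGroup E] {h : ℝ → E} {a b : ℝ} (hab : a ≤ b)
    (hc : ContinuousOn h (Icc a b)) : IntervalIntegrable h volume a b :=
  (by rwa [uIcc_of_le hab] : ContinuousOn h (uIcc a b)).intervalIntegrable

set_option maxHeartbeats 2000000 in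
lemma key_expansion {n : ℕ} (f g : Euc n → Euc n)
    (hf : ContDiff ℝ 1 f) (hg : ContDiff ℝ 1 g)
    (u : Euc n → ℝ) (hu : ContDiff ℝ 2 u) (x₀ : Euc n)
    (X : ℝ → ℝ → Euc n) (hX : ∀ t > (0 : ℝ), IsSwitchTraj f g t x₀ (X t)) :
    (fun t : ℝ => u (X t (2 * t)) - u x₀ - t * ⟪gradient u x₀, f x₀ + g x₀⟫ -
        t ^ 2 / 2 * (H2 f f u x₀ + H2 g g u x₀ + 2 * H2 f g u x₀))
      =o[𝓝[>] (0 : ℝ)] fun t => t ^ 2 := by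
  have hu1 : ContDiff ℝ 1 u := hu.of_le one_le_two
  have hgrad : ContDiff ℝ 1 (gradient u) := grad_cd hu
  set Vf : Euc n → ℝ := fun y => ⟪gradient u y, f y⟫ with hVf_def
  set Vg : Euc n → ℝ := fun y => ⟪gradient u y, g y⟫ with hVg_def
  have hVf : ContDiff ℝ 1 Vf := hgrad.inner ℝ hf
  have hVg : ContDiff ℝ 1 Vg := hgrad.inner ℝ hg
  set Q1 : ℝ := fderiv ℝ Vf x₀ (f x₀) with hQ1_def
  set Q2 : ℝ := fderiv ℝ Vg x₀ (g x₀) with hQ2_def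
  set Q3 : ℝ := fderiv ℝ Vg x₀ (f x₀) with hQ3_def
  have hH1 : H2 f f u x₀ = Q1 := rfl
  have hH2 : H2 g g u x₀ = Q2 := rfl
  have hH3 : H2 f g u x₀ = Q3 := rfl
  obtain ⟨Mf, hMf0⟩ := (isCompact_closedBall x₀ 1).exists_bound_of_continuousOn
    hf.continuous.continuousOn
  obtain ⟨Mg, hMg0⟩ := (isCompact_closedBall x₀ 1).exists_bound_of_continuousOn
    hg.continuous.continuousOn
  set M : ℝ := max 1 (max Mf Mg) with hM_def
  have hM1 : 1 ≤ M := le_max_left _ _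
  have hM0 : 0 < M := by linarith
  have hfM : ∀ y ∈ closedBall x₀ 1, ‖f y‖ ≤ M := fun y hy =>
    (hMf0 y hy).trans ((le_max_left _ _).trans (le_max_right _ _))
  have hgM : ∀ y ∈ closedBall x₀ 1, ‖g y‖ ≤ M := fun y hy =>
    (hMg0 y hy).trans ((le_max_right _ _).trans (le_max_right _ _))
  have hc1 : Continuous fun y => fderiv ℝ Vf y (f y) :=
    (hVf.continuous_fderiv one_ne_zero).clm_apply hf.continuous
  have hc2 : Continuous fun y => fderiv ℝ Vg y (g y) :=
    (hVg.continuous_fderiv one_ne_zero).clm_apply hg.continuous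
  have hc3 : Continuous fun y => fderiv ℝ Vg y (f y) :=
    (hVg.continuous_fderiv one_ne_zero).clm_apply hf.continuous
  rw [Asymptotics.isLittleO_iff]
  intro c hc
  set ε : ℝ := c / 3 with hε_def
  have hε : 0 < ε := by positivity
  obtain ⟨δ1, hδ1, hd1'⟩ := Metric.continuousAt_iff.1 hc1.continuousAt ε hε
  obtain ⟨δ2, hδ2, hd2'⟩ := Metric.continuousAt_iff.1 hc2.continuousAt ε hε
  obtain ⟨δ3, hδ3, hd3'⟩ := Metric.continuousAt_iff.1 hc3.continuousAt ε hε
  set δ : ℝ := min δ1 (min δ2 δ3) with hδ_def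
  have hδ0 : 0 < δ := lt_min hδ1 (lt_min hδ2 hδ3)
  set t₀ : ℝ := min (1 / (8 * M)) (δ / (8 * M)) with ht₀_def
  have ht₀ : 0 < t₀ := lt_min (by positivity) (by positivity)
  filter_upwards [Ioc_mem_nhdsGT ht₀] with t htt
  obtain ⟨ht, ht₀t⟩ := htt
  obtain ⟨hx0, hxc, hxd1, hxd2⟩ := hX t ht
  set x : ℝ → Euc n := X t with hx_def
  have ht2 : t ≤ 2 * t := by linarith
  have h2tM_half : 2 * t * M ≤ 1 / 2 := by
    have h1 : t ≤ 1 / (8 * M) := ht₀t.trans (min_le_left _ _)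
    have h2 : 2 * t * M ≤ 2 * (1 / (8 * M)) * M := by nlinarith
    have h3 : 2 * (1 / (8 * M)) * M = 1 / 4 := by field_simp; ring
    linarith
  have h2tM_δ : 2 * t * M < δ := by
    have h1 : t ≤ δ / (8 * M) := ht₀t.trans (min_le_right _ _)
    have h2 : 2 * t * M ≤ 2 * (δ / (8 * M)) * M := by nlinarith
    have h3 : 2 * (δ / (8 * M)) * M = δ / 4 := by field_simp; ring
    linarith
  have hesc : ∀ s ∈ Icc (0:ℝ) (2 * t), ‖x s - x₀‖ ≤ M * s :=
    escape hf.continuous hg.continuous hM1 hfM hgM ht h2tM_half hx0 hxc hxd1 hxd2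
  have hdist : ∀ s ∈ Icc (0:ℝ) (2 * t), dist (x s) x₀ < δ := by
    intro s hs
    rw [dist_eq_norm]
    calc ‖x s - x₀‖ ≤ M * s := hesc s hs
      _ ≤ M * (2 * t) := by nlinarith [hs.2]
      _ < δ := by nlinarith
  have hq1 : ∀ s ∈ Icc (0:ℝ) (2 * t), |fderiv ℝ Vf (x s) (f (x s)) - Q1| ≤ ε := by
    intro s hs
    have h := hd1' ((hdist s hs).trans_le (min_le_left _ _))
    rw [Real.dist_eq] at h
    exact h.le
  have hq2 : ∀ s ∈ Icc (0:ℝ) (2 * t), |fderiv ℝ Vg (x s) (g (x s)) - Q2| ≤ ε := by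
    intro s hs
    have h := hd2' ((hdist s hs).trans_le ((min_le_right _ _).trans (min_le_left _ _)))
    rw [Real.dist_eq] at h
    exact h.le
  have hq3 : ∀ s ∈ Icc (0:ℝ) (2 * t), |fderiv ℝ Vg (x s) (f (x s)) - Q3| ≤ ε := by
    intro s hs
    have h := hd3' ((hdist s hs).trans_le ((min_le_right _ _).trans (min_le_right _ _)))
    rw [Real.dist_eq] at h
    exact h.le
  have hIcc1 : Icc (0:ℝ) t ⊆ Icc 0 (2 * t) := Icc_subset_Icc le_rfl ht2
  have hIcc2 : Icc t (2 * t) ⊆ Icc 0 (2 * t) := Icc_subset_Icc ht.le le_rfl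
  have huxc : ContinuousOn (fun s => u (x s)) (Icc 0 (2 * t)) :=
    hu1.continuous.comp_continuousOn hxc
  have hVfxc : ContinuousOn (fun s => Vf (x s)) (Icc 0 (2 * t)) :=
    hVf.continuous.comp_continuousOn hxc
  have hVgxc : ContinuousOn (fun s => Vg (x s)) (Icc 0 (2 * t)) :=
    hVg.continuous.comp_continuousOn hxc
  have hq1c : ContinuousOn (fun r => fderiv ℝ Vf (x r) (f (x r))) (Icc 0 (2 * t)) :=
    hc1.comp_continuousOn hxc
  have hq2c : ContinuousOn (fun r => fderiv ℝ Vg (x r) (g (x r))) (Icc 0 (2 * t)) :=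
    hc2.comp_continuousOn hxc
  have hq3c : ContinuousOn (fun r => fderiv ℝ Vg (x r) (f (x r))) (Icc 0 (2 * t)) :=
    hc3.comp_continuousOn hxc
  have hucomp1 : ∀ s ∈ Ioo (0:ℝ) t, HasDerivAt (fun r => u (x r)) (Vf (x s)) s := by
    intro s hs
    have h := (hu1.differentiable one_ne_zero (x s)).hasFDerivAt.comp_hasDerivAt s (hxd1 s hs)
    have heq : Vf (x s) = fderiv ℝ u (x s) (f (x s)) := inner_grad_eq
    rw [heq]; exact h
  have hucomp2 : ∀ s ∈ Ioo t (2 * t), HasDerivAt (fun r => u (x r)) (Vg (x s)) s := by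
    intro s hs
    have h := (hu1.differentiable one_ne_zero (x s)).hasFDerivAt.comp_hasDerivAt s (hxd2 s hs)
    have heq : Vg (x s) = fderiv ℝ u (x s) (g (x s)) := inner_grad_eq
    rw [heq]; exact h
  have hVfcomp : ∀ s ∈ Ioo (0:ℝ) t,
      HasDerivAt (fun r => Vf (x r)) (fderiv ℝ Vf (x s) (f (x s))) s := fun s hs =>
    ((hVf.differentiable one_ne_zero (x s)).hasFDerivAt.comp_hasDerivAt s (hxd1 s hs))
  have hVgcomp1 : ∀ s ∈ Ioo (0:ℝ) t,
      HasDerivAt (fun r => Vg (x r)) (fderiv ℝ Vg (x s) (f (x s))) s := fun s hs =>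
    ((hVg.differentiable one_ne_zero (x s)).hasFDerivAt.comp_hasDerivAt s (hxd1 s hs))
  have hVgcomp2 : ∀ s ∈ Ioo t (2 * t),
      HasDerivAt (fun r => Vg (x r)) (fderiv ℝ Vg (x s) (g (x s))) s := fun s hs =>
    ((hVg.differentiable one_ne_zero (x s)).hasFDerivAt.comp_hasDerivAt s (hxd2 s hs))
  have e1 := ftc_gen (huxc.mono hIcc1) (hVfxc.mono hIcc1) hucomp1 t ⟨ht.le, le_rfl⟩
  have e2 := ftc_gen (huxc.mono hIcc2) (hVgxc.mono hIcc2) hucomp2 (2 * t) ⟨ht2, le_rfl⟩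
  have e3 := ftc_gen (hVfxc.mono hIcc1) (hq1c.mono hIcc1) hVfcomp
  have e5 := ftc_gen (hVgxc.mono hIcc1) (hq3c.mono hIcc1) hVgcomp1 t ⟨ht.le, le_rfl⟩
  have e4 := ftc_gen (hVgxc.mono hIcc2) (hq2c.mono hIcc2) hVgcomp2
  have hρ1 : ∀ s ∈ Icc (0:ℝ) t, |Vf (x s) - Vf x₀ - Q1 * s| ≤ ε * t := by
    intro s hs
    have hxsub : Icc (0:ℝ) s ⊆ Icc 0 (2 * t) := Icc_subset_Icc le_rfl (hs.2.trans ht2)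
    have he := e3 s hs
    rw [hx0] at he
    have hint1 : IntervalIntegrable (fun r => fderiv ℝ Vf (x r) (f (x r))) volume 0 s :=
      contOn_intInt hs.1 (hq1c.mono hxsub)
    have heq : Vf (x s) - Vf x₀ - Q1 * s
        = ∫ r in (0:ℝ)..s, (fderiv ℝ Vf (x r) (f (x r)) - Q1) := by
      rw [intervalIntegral.integral_sub hint1 intervalIntegrable_const,
        intervalIntegral.integral_const, he]
      simp; ring
    rw [heq]
    have hb := intervalIntegral.norm_integral_le_of_norm_le_const (C := ε)
      (f := fun r => fderiv ℝ Vf (x r) (f (x r)) - Q1) (a := 0) (b := s) ?_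
    · calc |∫ r in (0:ℝ)..s, (fderiv ℝ Vf (x r) (f (x r)) - Q1)| ≤ ε * |s - 0| := hb
        _ ≤ ε * t := by rw [sub_zero, abs_of_nonneg hs.1]; nlinarith [hs.2]
    · intro r hr
      rw [uIoc_of_le hs.1] at hr
      exact hq1 r ⟨hr.1.le, hr.2.trans (hs.2.trans ht2)⟩
  have hρ2 : ∀ s ∈ Icc t (2 * t),
      |Vg (x s) - Vg x₀ - t * Q3 - Q2 * (s - t)| ≤ 2 * (ε * t) := by
    intro s hs
    have he4 := e4 s hs
    have he5 := e5
    rw [hx0] at he5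
    have hint3 : IntervalIntegrable (fun r => fderiv ℝ Vg (x r) (f (x r))) volume 0 t :=
      contOn_intInt ht.le (hq3c.mono hIcc1)
    have hint2 : IntervalIntegrable (fun r => fderiv ℝ Vg (x r) (g (x r))) volume t s :=
      contOn_intInt hs.1 ((hq2c.mono hIcc2).mono (Icc_subset_Icc le_rfl hs.2))
    have heq : Vg (x s) - Vg x₀ - t * Q3 - Q2 * (s - t)
        = (∫ r in (0:ℝ)..t, (fderiv ℝ Vg (x r) (f (x r)) - Q3))
          + ∫ r in t..s, (fderiv ℝ Vg (x r) (g (x r)) - Q2) := by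
      rw [intervalIntegral.integral_sub hint3 intervalIntegrable_const,
        intervalIntegral.integral_sub hint2 intervalIntegrable_const,
        intervalIntegral.integral_const, intervalIntegral.integral_const,
        he4, he5]
      simp; ring
    rw [heq]
    have hb1 := intervalIntegral.norm_integral_le_of_norm_le_const (C := ε)
      (f := fun r => fderiv ℝ Vg (x r) (f (x r)) - Q3) (a := 0) (b := t) ?_
    · have hb2 := intervalIntegral.norm_integral_le_of_norm_le_const (C := ε)
        (f := fun r => fderiv ℝ Vg (x r) (g (x r)) - Q2) (a := t) (b := s) ?_
      · calc |(∫ r in (0:ℝ)..t, (fderiv ℝ Vg (x r) (f (x r)) - Q3))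
            + ∫ r in t..s, (fderiv ℝ Vg (x r) (g (x r)) - Q2)|
            ≤ |∫ r in (0:ℝ)..t, (fderiv ℝ Vg (x r) (f (x r)) - Q3)|
              + |∫ r in t..s, (fderiv ℝ Vg (x r) (g (x r)) - Q2)| := abs_add_le _ _
          _ ≤ ε * |t - 0| + ε * |s - t| := add_le_add hb1 hb2
          _ ≤ 2 * (ε * t) := by
              rw [sub_zero, abs_of_nonneg ht.le, abs_of_nonneg (by linarith [hs.1])]
              nlinarith [hs.2]
      · intro r hr
        rw [uIoc_of_le hs.1] at hr
        exact hq2 r ⟨ht.le.trans hr.1.le, hr.2.trans hs.2⟩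
    · intro r hr
      rw [uIoc_of_le ht.le] at hr
      exact hq3 r ⟨hr.1.le, hr.2.trans ht2⟩
  have hA : ∫ s in (0:ℝ)..t, Vf (x s)
      = t * Vf x₀ + Q1 * (t ^ 2 / 2) + ∫ s in (0:ℝ)..t, (Vf (x s) - Vf x₀ - Q1 * s) := by
    have hi1 : IntervalIntegrable (fun s => Vf (x s)) volume 0 t :=
      contOn_intInt ht.le (hVfxc.mono hIcc1)
    have hi2 : IntervalIntegrable (fun s : ℝ => Vf x₀ + Q1 * s) volume 0 t :=
      (continuous_const.add (continuous_const.mul continuous_id)).intervalIntegrable _ _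
    have heq : (fun s => Vf (x s) - Vf x₀ - Q1 * s)
        = fun s => Vf (x s) - (Vf x₀ + Q1 * s) := funext fun s => by ring
    rw [heq, intervalIntegral.integral_sub hi1 hi2, int_affine]
    ring
  have hB : ∫ s in t..(2 * t), Vg (x s)
      = t * Vg x₀ + t ^ 2 * Q3 + Q2 * (t ^ 2 / 2)
        + ∫ s in t..(2 * t), (Vg (x s) - Vg x₀ - t * Q3 - Q2 * (s - t)) := by
    have hi1 : IntervalIntegrable (fun s => Vg (x s)) volume t (2 * t) :=
      contOn_intInt ht2 (hVgxc.mono hIcc2)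
    have hi2 : IntervalIntegrable (fun s : ℝ => (Vg x₀ + t * Q3 - Q2 * t) + Q2 * s)
        volume t (2 * t) :=
      (continuous_const.add (continuous_const.mul continuous_id)).intervalIntegrable _ _
    have heq : (fun s => Vg (x s) - Vg x₀ - t * Q3 - Q2 * (s - t))
        = fun s => Vg (x s) - ((Vg x₀ + t * Q3 - Q2 * t) + Q2 * s) := funext fun s => by ring
    rw [heq, intervalIntegral.integral_sub hi1 hi2, int_affine]
    ring
  have hiadd : ⟪gradient u x₀, f x₀ + g x₀⟫ = Vf x₀ + Vg x₀ := by
    simp [hVf_def, hVg_def, inner_add_right]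
  have he1 := e1
  rw [hx0] at he1
  have hfinal : u (x (2 * t)) - u x₀ - t * ⟪gradient u x₀, f x₀ + g x₀⟫
      - t ^ 2 / 2 * (Q1 + Q2 + 2 * Q3)
      = (∫ s in (0:ℝ)..t, (Vf (x s) - Vf x₀ - Q1 * s))
        + ∫ s in t..(2 * t), (Vg (x s) - Vg x₀ - t * Q3 - Q2 * (s - t)) := by
    rw [e2, he1, hiadd, hA, hB]; ring
  rw [hH1, hH2, hH3]
  rw [show u (x (2 * t)) - u x₀ - t * ⟪gradient u x₀, f x₀ + g x₀⟫
      - t ^ 2 / 2 * (Q1 + Q2 + 2 * Q3)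
      = (∫ s in (0:ℝ)..t, (Vf (x s) - Vf x₀ - Q1 * s))
        + ∫ s in t..(2 * t), (Vg (x s) - Vg x₀ - t * Q3 - Q2 * (s - t)) from hfinal]
  have hb1 := intervalIntegral.norm_integral_le_of_norm_le_const (C := ε * t)
    (f := fun s => Vf (x s) - Vf x₀ - Q1 * s) (a := 0) (b := t) ?_
  · have hb2 := intervalIntegral.norm_integral_le_of_norm_le_const (C := 2 * (ε * t))
      (f := fun s => Vg (x s) - Vg x₀ - t * Q3 - Q2 * (s - t)) (a := t) (b := 2 * t) ?_
    · have habs : ‖(∫ s in (0:ℝ)..t, (Vf (x s) - Vf x₀ - Q1 * s))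
          + ∫ s in t..(2 * t), (Vg (x s) - Vg x₀ - t * Q3 - Q2 * (s - t))‖
          ≤ ε * t * |t - 0| + 2 * (ε * t) * |2 * t - t| :=
        (norm_add_le _ _).trans (add_le_add hb1 hb2)
      have hcalc : ε * t * |t - 0| + 2 * (ε * t) * |2 * t - t| = c * t ^ 2 := by
        rw [sub_zero, abs_of_nonneg ht.le, show (2:ℝ) * t - t = t by ring,
          abs_of_nonneg ht.le, hε_def]
        ring
      rw [Real.norm_eq_abs (t ^ 2), abs_of_nonneg (sq_nonneg t)]
      linarith [habs, hcalc.le, hcalc.ge]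
    · intro s hs
      rw [uIoc_of_le ht2] at hs
      exact hρ2 s ⟨hs.1.le, hs.2⟩
  · intro s hs
    rw [uIoc_of_le ht.le] at hs
    exact hρ1 s ⟨hs.1.le, hs.2⟩

end Helpers

/-- Proposition 2.4: second order expansion of `u` along a single-switch
trajectory, expressed with second order Hamiltonians, together with the particular case
`f ≡ g`. -/
theorem statement2 {n : ℕ} (f g : Euc n → Euc n)
    (hf : ContDiff ℝ 1 f) (hg : ContDiff ℝ 1 g)
    (u : Euc n → ℝ) (hu : ContDiff ℝ 2 u) (x₀ : Euc n)
    (X : ℝ → ℝ → Euc n) (hX : ∀ t > (0 : ℝ), IsSwitchTraj f g t x₀ (X t)) :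
    ((fun t : ℝ => u (X t (2 * t)) - u x₀ - t * ⟪gradient u x₀, f x₀ + g x₀⟫ -
        t ^ 2 / 2 * (H2 (fun y => f y + g y) (fun y => f y + g y) u x₀ +
          ⟪gradient u x₀, lieBracket f g x₀⟫))
      =o[𝓝[>] (0 : ℝ)] fun t => t ^ 2) ∧
    ((fun t : ℝ => u (X t (2 * t)) - u x₀ - t * ⟪gradient u x₀, f x₀ + g x₀⟫ -
        t ^ 2 / 2 * (H2 f f u x₀ + H2 g g u x₀ + 2 * H2 f g u x₀))
      =o[𝓝[>] (0 : ℝ)] fun t => t ^ 2) ∧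
    (f = g →
      (fun t : ℝ => u (X t (2 * t)) - u x₀ -
          2 * (t * ⟪gradient u x₀, f x₀⟫ + H2 f f u x₀ * t ^ 2))
        =o[𝓝[>] (0 : ℝ)] fun t => t ^ 2) := by
  have h2nd := key_expansion f g hf hg u hu x₀ X hX
  refine ⟨?_, h2nd, ?_⟩
  · have hid := H2_identity f g hf hg u hu x₀
    have heq : (fun t : ℝ => u (X t (2 * t)) - u x₀ - t * ⟪gradient u x₀, f x₀ + g x₀⟫ -
        t ^ 2 / 2 * (H2 (fun y => f y + g y) (fun y => f y + g y) u x₀ +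
          ⟪gradient u x₀, lieBracket f g x₀⟫))
        = fun t : ℝ => u (X t (2 * t)) - u x₀ - t * ⟪gradient u x₀, f x₀ + g x₀⟫ -
        t ^ 2 / 2 * (H2 f f u x₀ + H2 g g u x₀ + 2 * H2 f g u x₀) := by
      funext t; rw [hid]
    rw [heq]; exact h2nd
  · intro hfg
    subst hfg
    have heq : (fun t : ℝ => u (X t (2 * t)) - u x₀ -
          2 * (t * ⟪gradient u x₀, f x₀⟫ + H2 f f u x₀ * t ^ 2))
        = fun t : ℝ => u (X t (2 * t)) - u x₀ - t * ⟪gradient u x₀, f x₀ + f x₀⟫ -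
        t ^ 2 / 2 * (H2 f f u x₀ + H2 f f u x₀ + 2 * H2 f f u x₀) := by
      funext t
      rw [inner_add_right]
      ring
    rw [heq]; exact h2nd
end

section
/- Let 𝒯 ⊂ ℝⁿ be a closed set, x̄ ∈ ∂𝒯, and d(x) = dist(x,𝒯). Let T : ℝⁿ → [0,∞) satisfy T = 0 on 𝒯, and suppose there are r, C > 0 with r ≤ 1 such that T(x) ≤ C|x − x̄|^{1/2} for all x ∈ B_r(x̄). Let K, u ≥ 1 and define D := (B_r(x̄) \ {x̄}) ∩ {x : K d(x) ≤ |x − x̄|^u} and B := ∂𝒯 ∩ (B_r(x̄) \ {x̄}). Assume there are constants L, R > 0 and s ∈ (0,1] such that for every y ∈ B there exist r_y, ρ_y > 0 with: T(x) ≤ (2L/ρ_y) d(x) for all x ∈ B_{r_y}(y), r_y^s ≤ R ρ_y, and D ⊂ ∪_{y∈B} B_{r_y}(y). Then there exists M ≥ 0 such that T(x) ≤ M d(x)^{s̄} for all x ∈ B_r(x̄), where s̄ = min{1/(2u), 1 − s}. -/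
open Set Filter Metric Matrix MeasureTheory Asymptotics
open scoped RealInnerProductSpace ENNReal Topology

/-- Proposition 3.4: combining the square-root estimate at `xbar` with first
order (Lipschitz-type) estimates at nearby boundary points yields a Hölder estimate
`T(x) ≤ M d(x)^{min(1/(2p), 1-s)}` in terms of the distance from the target. -/
theorem statement5 {n : ℕ} (𝒯 : Set (Euc n)) (h𝒯 : IsClosed 𝒯)
    (xbar : Euc n) (hxbar : xbar ∈ frontier 𝒯)
    (T : Euc n → ℝ) (hT0 : ∀ x, 0 ≤ T x) (hTz : ∀ x ∈ 𝒯, T x = 0)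
    (r C : ℝ) (hr : 0 < r) (hr1 : r ≤ 1) (hC : 0 < C)
    (hest : ∀ x ∈ closedBall xbar r, T x ≤ C * ‖x - xbar‖ ^ ((1 : ℝ) / 2))
    (K p : ℝ) (hK : 1 ≤ K) (hp : 1 ≤ p)
    (L R s : ℝ) (hL : 0 < L) (hR : 0 < R) (hs : s ∈ Ioc (0 : ℝ) 1)
    (rr ρ : Euc n → ℝ)
    (hB : ∀ y ∈ frontier 𝒯 ∩ (closedBall xbar r \ {xbar}),
      0 < rr y ∧ 0 < ρ y ∧
        (∀ x ∈ closedBall y (rr y), T x ≤ 2 * L / ρ y * infDist x 𝒯) ∧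
        rr y ^ s ≤ R * ρ y)
    (hcov : (closedBall xbar r \ {xbar}) ∩ {x | K * infDist x 𝒯 ≤ ‖x - xbar‖ ^ p} ⊆
      ⋃ y ∈ frontier 𝒯 ∩ (closedBall xbar r \ {xbar}), closedBall y (rr y)) :
    ∃ M : ℝ, 0 ≤ M ∧ ∀ x ∈ closedBall xbar r,
      T x ≤ M * infDist x 𝒯 ^ min (1 / (2 * p)) (1 - s) := by
  obtain ⟨hs0, hs1⟩ := hs
  have hxT : xbar ∈ 𝒯 := h𝒯.closure_eq ▸ hxbar.1
  have hp0 : (0:ℝ) < p := lt_of_lt_of_le one_pos hp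
  set sb := min (1 / (2*p)) (1-s) with hsb
  have hsb0 : 0 ≤ sb := le_min (by positivity) (by linarith)
  have hK0 : (0:ℝ) < K := lt_of_lt_of_le one_pos hK
  set M := max C (max (C * K ^ (1/(2*p))) (2*L*R)) with hM
  have hM0 : 0 ≤ M := le_trans hC.le (le_max_left _ _)
  refine ⟨M, hM0, ?_⟩
  intro x hx
  set d := infDist x 𝒯 with hd
  have hd0 : 0 ≤ d := infDist_nonneg
  rcases hd0.eq_or_lt.imp Eq.symm id with hdz | hdpos
  · -- d = 0 : x ∈ 𝒯, so T x = 0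
    have hxmem : x ∈ 𝒯 := by
      rw [← h𝒯.closure_eq]
      exact mem_closure_iff_infDist_zero ⟨xbar, hxT⟩ |>.mpr (by rw [← hd]; exact hdz)
    rw [hTz x hxmem]
    exact mul_nonneg hM0 (Real.rpow_nonneg hd0 _)
  -- d > 0
  have hdle : d ≤ ‖x - xbar‖ := by
    have := infDist_le_dist_of_mem hxT (x := x)
    rwa [dist_eq_norm] at this
  have hd1 : d ≤ 1 := le_trans hdle (le_trans (by
      have := mem_closedBall.mp hx; rwa [dist_eq_norm] at this) hr1)
  have hne : x ≠ xbar := by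
    intro h; rw [h] at hdle; simp at hdle; linarith
  have hnn : (0:ℝ) ≤ ‖x - xbar‖ := norm_nonneg _
  by_cases hcase : K * d ≤ ‖x - xbar‖ ^ p
  · -- covering case
    have hxD : x ∈ (closedBall xbar r \ {xbar}) ∩ {x | K * infDist x 𝒯 ≤ ‖x - xbar‖ ^ p} :=
      ⟨⟨hx, by simpa using hne⟩, hcase⟩
    obtain ⟨y, hyB, hxy⟩ := mem_iUnion₂.mp (hcov hxD)
    obtain ⟨hry, hρy, hTly, hrρ⟩ := hB y hyB
    have hyT : y ∈ 𝒯 := h𝒯.closure_eq ▸ (frontier_subset_closure (hyB.1))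
    have hdr : d ≤ rr y := by
      have h1 : d ≤ dist x y := infDist_le_dist_of_mem hyT
      exact h1.trans (mem_closedBall.mp hxy)
    have h1 : T x ≤ 2*L/ρ y * d := hTly x hxy
    have h3 : d ^ s ≤ R * ρ y := (Real.rpow_le_rpow hd0 hdr hs0.le).trans hrρ
    have hds : (0:ℝ) < d ^ s := Real.rpow_pos_of_pos hdpos s
    have h4 : 2*L/ρ y ≤ 2*L*R/d^s := by
      rw [div_le_div_iff₀ hρy hds]
      nlinarith
    have h5 : T x ≤ (2*L*R/d^s) * d :=
      le_trans h1 (mul_le_mul_of_nonneg_right h4 hd0)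
    have e : (2*L*R/d^s)*d = 2*L*R * d^(1-s) := by
      rw [Real.rpow_sub hdpos, Real.rpow_one]; ring
    have h6 : d^(1-s) ≤ d^sb :=
      Real.rpow_le_rpow_of_exponent_ge hdpos hd1 (min_le_right _ _)
    calc T x ≤ 2*L*R * d^(1-s) := by rw [← e]; exact h5
      _ ≤ 2*L*R * d^sb := mul_le_mul_of_nonneg_left h6 (by positivity)
      _ ≤ M * d^sb := mul_le_mul_of_nonneg_right
            (le_trans (le_max_right _ _) (le_max_right _ _)) (Real.rpow_nonneg hd0 _)
  · -- square-root estimate case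
    push_neg at hcase
    have h1 : T x ≤ C * ‖x - xbar‖ ^ ((1:ℝ)/2) := hest x hx
    have e1 : ‖x - xbar‖ ^ ((1:ℝ)/2) = (‖x - xbar‖ ^ p) ^ (1/(2*p)) := by
      rw [← Real.rpow_mul hnn]; congr 1; field_simp
    have h2 : (‖x - xbar‖ ^ p) ^ (1/(2*p)) ≤ (K*d)^(1/(2*p)) :=
      Real.rpow_le_rpow (Real.rpow_nonneg hnn _) hcase.le (by positivity)
    have h3 : (K*d)^(1/(2*p)) = K^(1/(2*p)) * d^(1/(2*p)) := Real.mul_rpow hK0.le hd0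
    have h4 : d^(1/(2*p)) ≤ d^sb :=
      Real.rpow_le_rpow_of_exponent_ge hdpos hd1 (min_le_left _ _)
    have hKp : (0:ℝ) ≤ K ^ (1/(2*p)) := Real.rpow_nonneg hK0.le _
    calc T x ≤ C * ‖x - xbar‖ ^ ((1:ℝ)/2) := h1
      _ = C * ((‖x - xbar‖ ^ p) ^ (1/(2*p))) := by rw [e1]
      _ ≤ C * ((K*d)^(1/(2*p))) := mul_le_mul_of_nonneg_left h2 hC.le
      _ = (C * K^(1/(2*p))) * d^(1/(2*p)) := by rw [h3]; ring
      _ ≤ (C * K^(1/(2*p))) * d^sb :=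
            mul_le_mul_of_nonneg_left h4 (by positivity)
      _ ≤ M * d^sb := mul_le_mul_of_nonneg_right
            (le_trans (le_max_left _ _) (le_max_right _ _)) (Real.rpow_nonneg hd0 _)
end

section
/- Let σ : ℝⁿ → ℝ^{n×m} be of class C¹, u ∈ C²(ℝⁿ), a₁, a₂ ∈ B₁(0) ⊂ ℝᵐ, and x₀ ∈ ℝⁿ. For each t > 0 let x^t be the single-switch trajectory with data (σa₁, σa₂, t, x₀). Then as t → 0⁺: u(x^t(2t)) − u(x₀) = ∇u(x₀)·σ(x₀)(a₁+a₂) t + K(x₀)(a₁,a₂)·(a₁,a₂) t²/2 + o(t²). If in particular ∇u(x₀)·σ(x₀)a₁ = ∇u(x₀)·σ(x₀)a₂ = 0, then u(x^t(2t)) − u(x₀) = K(x₀)(a₁,a₂)·(a₁,a₂) t²/2 + o(t²). -/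
open Set Filter Metric Matrix MeasureTheory Asymptotics
open scoped RealInnerProductSpace ENNReal Topology

section AuxProof
open intervalIntegral
variable {m n : ℕ}

lemma mvt_Ioo {E : Type*} [NormedAddCommGroup E] [NormedSpace ℝ E]
    (y d : ℝ → E) (C a b : ℝ) (hab : a ≤ b)
    (hcont : ContinuousOn y (Icc a b))
    (hd : ∀ s ∈ Ioo a b, HasDerivAt y (d s) s)
    (hb : ∀ s ∈ Ioo a b, ‖d s‖ ≤ C) : ‖y b - y a‖ ≤ C * (b - a) := by
  rcases eq_or_lt_of_le hab with h|h
  · simp [← h]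
  have key : ∀ a' ∈ Ioo a b, ‖y b - y a'‖ ≤ C * (b - a') := by
    intro a' ha'
    have h1 : ContinuousOn y (Icc a' b) :=
      hcont.mono (Icc_subset_Icc ha'.1.le le_rfl)
    have h2 : ∀ s ∈ Ico a' b, HasDerivWithinAt y (d s) (Ici s) s := fun s hs =>
      ((hd s ⟨lt_of_lt_of_le ha'.1 hs.1, hs.2⟩).hasDerivWithinAt)
    have h3 : ∀ s ∈ Ico a' b, ‖d s‖ ≤ C := fun s hs =>
      hb s ⟨lt_of_lt_of_le ha'.1 hs.1, hs.2⟩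
    exact norm_image_sub_le_of_norm_deriv_right_le_segment h1 h2 h3 b ⟨ha'.2.le, le_rfl⟩
  have hne : (𝓝[Ioo a b] a).NeBot := by
    refine mem_closure_iff_nhdsWithin_neBot.mp ?_
    rw [closure_Ioo h.ne]; exact ⟨le_rfl, h.le⟩
  have hy : Tendsto (fun a' => ‖y b - y a'‖) (𝓝[Ioo a b] a) (𝓝 ‖y b - y a‖) := by
    have : ContinuousWithinAt y (Icc a b) a := hcont a ⟨le_rfl, h.le⟩
    have := (this.mono (Ioo_subset_Icc_self)).tendsto
    exact ((tendsto_const_nhds.sub this).norm)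
  have hl : Tendsto (fun a' => C * (b - a')) (𝓝[Ioo a b] a) (𝓝 (C * (b - a))) := by
    apply Tendsto.mono_left _ nhdsWithin_le_nhds
    exact (tendsto_const_nhds.sub tendsto_id).const_mul C
  exact le_of_tendsto_of_tendsto hy hl (eventually_nhdsWithin_of_forall key)

/-- A priori bound for switch trajectories. -/
lemma switch_apriori {E : Type*} [NormedAddCommGroup E] [NormedSpace ℝ E]
    (f g : E → E) (x : ℝ → E) (x₀ : E) (t M r : ℝ) (ht : 0 < t) (hM : 0 ≤ M)
    (hx0 : x 0 = x₀) (hcont : ContinuousOn x (Icc 0 (2*t)))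
    (hd1 : ∀ s ∈ Ioo (0:ℝ) t, HasDerivAt x (f (x s)) s)
    (hd2 : ∀ s ∈ Ioo t (2*t), HasDerivAt x (g (x s)) s)
    (hfb : ∀ y ∈ closedBall x₀ r, ‖f y‖ ≤ M)
    (hgb : ∀ y ∈ closedBall x₀ r, ‖g y‖ ≤ M)
    (hr : 2*t*M < r) :
    ∀ s ∈ Icc (0:ℝ) (2*t), ‖x s - x₀‖ ≤ M * s := by
  have hrpos : 0 < r := lt_of_le_of_lt (by positivity) hr
  have claim : ∀ T ∈ Icc (0:ℝ) (2*t), (∀ τ ∈ Icc (0:ℝ) T, ‖x τ - x₀‖ ≤ r) →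
      ∀ s ∈ Icc (0:ℝ) T, ‖x s - x₀‖ ≤ M * s := by
    intro T hT hball s hs
    have hcont' : ContinuousOn x (Icc 0 T) := hcont.mono (Icc_subset_Icc le_rfl hT.2)
    have hmem : ∀ τ ∈ Icc (0:ℝ) T, x τ ∈ closedBall x₀ r := by
      intro τ hτ; rw [mem_closedBall, dist_eq_norm]; exact hball τ hτ
    rcases le_or_gt s t with hst | hst
    · have := mvt_Ioo x (fun τ => f (x τ)) M 0 s hs.1
        (hcont'.mono (Icc_subset_Icc le_rfl hs.2))
        (fun τ hτ => hd1 τ ⟨hτ.1, lt_of_lt_of_le hτ.2 hst⟩)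
        (fun τ hτ => hfb _ (hmem τ ⟨hτ.1.le, hτ.2.le.trans hs.2⟩))
      rw [hx0] at this; simpa using this
    · have h1 : ‖x t - x₀‖ ≤ M * t := by
        have := mvt_Ioo x (fun τ => f (x τ)) M 0 t ht.le
          (hcont'.mono (Icc_subset_Icc le_rfl (hst.le.trans hs.2)))
          (fun τ hτ => hd1 τ hτ)
          (fun τ hτ => hfb _ (hmem τ ⟨hτ.1.le, hτ.2.le.trans (hst.le.trans hs.2)⟩))
        rw [hx0] at this; simpa using this
      have h2 : ‖x s - x t‖ ≤ M * (s - t) := by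
        have hs2t : s ≤ 2*t := hs.2.trans hT.2
        exact mvt_Ioo x (fun τ => g (x τ)) M t s hst.le
          (hcont'.mono (Icc_subset_Icc ht.le hs.2))
          (fun τ hτ => hd2 τ ⟨hτ.1, lt_of_lt_of_le hτ.2 hs2t⟩)
          (fun τ hτ => hgb _ (hmem τ ⟨(ht.trans hτ.1).le, hτ.2.le.trans hs.2⟩))
      calc ‖x s - x₀‖ ≤ ‖x s - x t‖ + ‖x t - x₀‖ := norm_sub_le_norm_sub_add_norm_sub _ _ _
        _ ≤ M * (s - t) + M * t := add_le_add h2 h1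
        _ = M * s := by ring
  -- bootstrap via sSup
  set A : Set ℝ := {T ∈ Icc (0:ℝ) (2*t) | ∀ τ ∈ Icc (0:ℝ) T, ‖x τ - x₀‖ ≤ r} with hA
  have h0A : (0:ℝ) ∈ A := by
    refine ⟨⟨le_rfl, by positivity⟩, ?_⟩
    intro τ hτ; have : τ = 0 := le_antisymm hτ.2 hτ.1
    simp [this, hx0, hrpos.le]
  have hbdd : BddAbove A := ⟨2*t, fun T hT => hT.1.2⟩
  set T₀ := sSup A with hT₀def
  have hT₀0 : 0 ≤ T₀ := le_csSup hbdd h0A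
  have hT₀2t : T₀ ≤ 2*t := csSup_le ⟨0, h0A⟩ (fun T hT => hT.1.2)
  have hT₀lt : ∀ τ, 0 ≤ τ → τ < T₀ → ‖x τ - x₀‖ ≤ r := by
    intro τ hτ0 hτ
    obtain ⟨T, hTA, hτT⟩ := exists_lt_of_lt_csSup ⟨0, h0A⟩ hτ
    exact hTA.2 τ ⟨hτ0, hτT.le⟩
  have hT₀A : T₀ ∈ A := by
    refine ⟨⟨hT₀0, hT₀2t⟩, ?_⟩
    intro τ hτ
    rcases eq_or_lt_of_le hτ.2 with h|h
    · -- τ = T₀, use continuity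
      rcases eq_or_lt_of_le hT₀0 with h0|h0
      · have hτ0 : τ = 0 := by rw [h]; linarith
        simp [hτ0, hx0, hrpos.le]
      · rw [h]
        have hcw : ContinuousWithinAt x (Icc 0 (2*t)) T₀ := hcont T₀ ⟨hT₀0, hT₀2t⟩
        have hne : (𝓝[Ico 0 T₀] T₀).NeBot := by
          refine mem_closure_iff_nhdsWithin_neBot.mp ?_
          rw [closure_Ico (ne_of_lt h0)]; exact ⟨hT₀0, le_rfl⟩
        have hyt : Tendsto (fun τ' => ‖x τ' - x₀‖) (𝓝[Ico 0 T₀] T₀) (𝓝 ‖x T₀ - x₀‖) := by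
          have := (hcw.mono (fun τ' hτ' => ⟨hτ'.1, hτ'.2.le.trans hT₀2t⟩ : Ico 0 T₀ ⊆ Icc 0 (2*t))).tendsto
          exact (this.sub tendsto_const_nhds).norm
        refine le_of_tendsto hyt (eventually_nhdsWithin_of_forall ?_)
        intro τ' hτ'; exact hT₀lt τ' hτ'.1 hτ'.2
    · exact hT₀lt τ hτ.1 h
  have hMT : ∀ s ∈ Icc (0:ℝ) T₀, ‖x s - x₀‖ ≤ M * s := claim T₀ ⟨hT₀0, hT₀2t⟩ hT₀A.2
  have hT₀eq : T₀ = 2*t := by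
    by_contra hne2
    have hT₀lt2t : T₀ < 2*t := lt_of_le_of_ne hT₀2t hne2
    -- x T₀ is well inside the ball
    have hin : ‖x T₀ - x₀‖ < r := by
      calc ‖x T₀ - x₀‖ ≤ M * T₀ := hMT T₀ ⟨hT₀0, le_rfl⟩
        _ ≤ M * (2*t) := by nlinarith
        _ < r := by linarith [hr]
    have hcw : ContinuousWithinAt x (Icc 0 (2*t)) T₀ := hcont T₀ ⟨hT₀0, hT₀2t⟩
    have hev : ∀ᶠ τ' in 𝓝[Icc 0 (2*t)] T₀, ‖x τ' - x₀‖ < r := by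
      have : Tendsto (fun τ' => ‖x τ' - x₀‖) (𝓝[Icc 0 (2*t)] T₀) (𝓝 ‖x T₀ - x₀‖) :=
        (hcw.tendsto.sub tendsto_const_nhds).norm
      exact this.eventually_lt tendsto_const_nhds hin
    rw [eventually_nhdsWithin_iff, Metric.eventually_nhds_iff] at hev
    obtain ⟨η, hη, hev⟩ := hev
    set T' := min (T₀ + η/2) (2*t) with hT'
    have hT'A : T' ∈ A := by
      constructor
      · exact ⟨le_trans hT₀0 (le_min (by linarith) hT₀2t), min_le_right _ _⟩
      · intro τ hτ
        rcases le_or_gt τ T₀ with h|h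
        · exact hT₀A.2 τ ⟨hτ.1, h⟩
        · have hd : dist τ T₀ < η := by
            rw [Real.dist_eq, abs_of_pos (by linarith)]
            have : τ ≤ T₀ + η/2 := hτ.2.trans (min_le_left _ _)
            linarith
          exact (hev hd ⟨hτ.1, hτ.2.trans (min_le_right _ _)⟩).le
    have : T' ≤ T₀ := le_csSup hbdd hT'A
    have : T₀ < T' := lt_min (by linarith) hT₀lt2t
    linarith
  intro s hs
  exact hMT s (hT₀eq ▸ hs)

set_option maxHeartbeats 1000000 in
lemma key_est {E : Type*} [NormedAddCommGroup E] [NormedSpace ℝ E]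
    (f g : E → E) (hf : ContDiff ℝ 1 f) (hg : ContDiff ℝ 1 g)
    (u : E → ℝ) (hu : ContDiff ℝ 2 u) (x₀ : E) {ε : ℝ} (hε : 0 < ε) :
    ∃ δ > 0, ∀ t, 0 < t → t < δ → ∀ x : ℝ → E,
      x 0 = x₀ → ContinuousOn x (Icc 0 (2*t)) →
      (∀ s ∈ Ioo (0:ℝ) t, HasDerivAt x (f (x s)) s) →
      (∀ s ∈ Ioo t (2*t), HasDerivAt x (g (x s)) s) →
      |u (x (2*t)) - u x₀ - t * (fderiv ℝ u x₀ (f x₀) + fderiv ℝ u x₀ (g x₀))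
        - t^2 * (fderiv ℝ (fun y => fderiv ℝ u y (f y)) x₀ (f x₀) / 2
               + fderiv ℝ (fun y => fderiv ℝ u y (g y)) x₀ (f x₀)
               + fderiv ℝ (fun y => fderiv ℝ u y (g y)) x₀ (g x₀) / 2)| ≤ ε * t^2 := by
  have hudiff : Differentiable ℝ u := hu.differentiable (by norm_num)
  have hDu : ContDiff ℝ 1 (fderiv ℝ u) := hu.fderiv_right (by norm_num)
  set φ : E → ℝ := fun y => fderiv ℝ u y (f y) with hφdef
  set ψ : E → ℝ := fun y => fderiv ℝ u y (g y) with hψdef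
  have hφ : ContDiff ℝ 1 φ := hDu.clm_apply hf
  have hψ : ContDiff ℝ 1 ψ := hDu.clm_apply hg
  set F := f x₀ with hF
  set G := g x₀ with hG
  set L₁ := fderiv ℝ φ x₀ with hL₁
  set L₂ := fderiv ℝ ψ x₀ with hL₂
  set M : ℝ := ‖F‖ + ‖G‖ + 1 with hM
  have hM1 : 1 ≤ M := by rw [hM]; have := norm_nonneg F; have := norm_nonneg G; linarith
  -- radius r₁ on which f, g are bounded by M
  obtain ⟨r₁, hr₁pos, hr₁⟩ : ∃ r₁ > 0, ∀ y ∈ closedBall x₀ r₁, ‖f y‖ ≤ M ∧ ‖g y‖ ≤ M := by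
    have h1 : ∀ᶠ y in 𝓝 x₀, dist (f y) F < 1 :=
      Metric.tendsto_nhds.mp (hf.continuous.continuousAt (x := x₀)) 1 one_pos
    have h2 : ∀ᶠ y in 𝓝 x₀, dist (g y) G < 1 :=
      Metric.tendsto_nhds.mp (hg.continuous.continuousAt (x := x₀)) 1 one_pos
    obtain ⟨r, hr, hball⟩ := Metric.eventually_nhds_iff_ball.mp (h1.and h2)
    refine ⟨r/2, by linarith, fun y hy => ?_⟩
    have hy' : y ∈ ball x₀ r := lt_of_le_of_lt (mem_closedBall.mp hy) (by linarith)
    obtain ⟨e1, e2⟩ := hball y hy'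
    rw [dist_eq_norm] at e1 e2
    have n1 := norm_sub_norm_le (f y) F
    have n2 := norm_sub_norm_le (g y) G
    have := norm_nonneg F; have := norm_nonneg G
    constructor <;> [skip; skip] <;> rw [hM] <;> linarith
  -- choose ε₁ and radius ρ with first-order estimates
  set C : ℝ := 3*M + ‖L₁‖ + 2*‖L₂‖ + 1 with hC
  have hCpos : 0 < C := by rw [hC]; have := norm_nonneg L₁; have := norm_nonneg L₂; linarith
  set ε₁ : ℝ := ε / C with hε₁def
  have hε₁pos : 0 < ε₁ := div_pos hε hCpos
  have hev1 : ∀ᶠ y in 𝓝 x₀, ‖f y - F‖ ≤ ε₁ := by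
    have : Tendsto (fun y => f y - F) (𝓝 x₀) (𝓝 (F - F)) :=
      ((hf.continuous.continuousAt (x := x₀)).sub tendsto_const_nhds)
    rw [sub_self] at this
    have h2 := this.norm
    rw [norm_zero] at h2
    exact h2.eventually_le_const hε₁pos
  have hev2 : ∀ᶠ y in 𝓝 x₀, ‖g y - G‖ ≤ ε₁ := by
    have : Tendsto (fun y => g y - G) (𝓝 x₀) (𝓝 (G - G)) :=
      ((hg.continuous.continuousAt (x := x₀)).sub tendsto_const_nhds)
    rw [sub_self] at this
    have h2 := this.norm
    rw [norm_zero] at h2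
    exact h2.eventually_le_const hε₁pos
  have hev3 : ∀ᶠ y in 𝓝 x₀, ‖φ y - φ x₀ - L₁ (y - x₀)‖ ≤ ε₁ * ‖y - x₀‖ := by
    have h := ((hφ.differentiable (by norm_num)) x₀).hasFDerivAt.isLittleO
    exact isLittleO_iff.mp h hε₁pos
  have hev4 : ∀ᶠ y in 𝓝 x₀, ‖ψ y - ψ x₀ - L₂ (y - x₀)‖ ≤ ε₁ * ‖y - x₀‖ := by
    have h := ((hψ.differentiable (by norm_num)) x₀).hasFDerivAt.isLittleO
    exact isLittleO_iff.mp h hε₁pos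
  obtain ⟨ρ', hρ'pos, hρ'⟩ := Metric.eventually_nhds_iff_ball.mp
    ((hev1.and hev2).and (hev3.and hev4))
  set ρ : ℝ := min r₁ (ρ'/2) with hρdef
  have hρpos : 0 < ρ := lt_min hr₁pos (by linarith)
  have hρball : ∀ y ∈ closedBall x₀ ρ, (‖f y - F‖ ≤ ε₁ ∧ ‖g y - G‖ ≤ ε₁) ∧
      ‖φ y - φ x₀ - L₁ (y - x₀)‖ ≤ ε₁ * ‖y - x₀‖ ∧
      ‖ψ y - ψ x₀ - L₂ (y - x₀)‖ ≤ ε₁ * ‖y - x₀‖ := by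
    intro y hy
    refine hρ' y ?_
    have : dist y x₀ ≤ ρ := mem_closedBall.mp hy
    have : ρ ≤ ρ'/2 := min_le_right _ _
    simp only [mem_ball]; linarith
  have hρr₁ : ρ ≤ r₁ := min_le_left _ _
  refine ⟨ρ / (2*M+1), by positivity, ?_⟩
  intro t ht htδ x hx0 hcont hd1 hd2
  have h2tM : 2*t*M < ρ := by
    have h1 : t * (2*M+1) < ρ := (lt_div_iff₀ (by linarith)).mp htδ
    nlinarith
  -- a priori bound
  have hap : ∀ s ∈ Icc (0:ℝ) (2*t), ‖x s - x₀‖ ≤ M * s := by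
    refine switch_apriori f g x x₀ t M ρ ht (by linarith) hx0 hcont hd1 hd2 ?_ ?_ h2tM
    · exact fun y hy => (hr₁ y (closedBall_subset_closedBall hρr₁ hy)).1
    · exact fun y hy => (hr₁ y (closedBall_subset_closedBall hρr₁ hy)).2
  have hmem : ∀ s ∈ Icc (0:ℝ) (2*t), x s ∈ closedBall x₀ ρ := by
    intro s hs
    rw [mem_closedBall, dist_eq_norm]
    calc ‖x s - x₀‖ ≤ M * s := hap s hs
      _ ≤ M * (2*t) := by nlinarith [hs.2, hs.1]
      _ ≤ ρ := by nlinarith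
  have hsub1 : Icc (0:ℝ) t ⊆ Icc 0 (2*t) := Icc_subset_Icc le_rfl (by linarith)
  have hsub2 : Icc t (2*t) ⊆ Icc (0:ℝ) (2*t) := Icc_subset_Icc ht.le le_rfl
  -- first-order refinements
  have hB1 : ∀ s ∈ Icc (0:ℝ) t, ‖x s - x₀ - s • F‖ ≤ ε₁ * s := by
    intro s hs
    have key := mvt_Ioo (fun τ => x τ - x₀ - τ • F) (fun τ => f (x τ) - F) ε₁ 0 s hs.1
      (((hcont.mono (fun τ hτ => hsub1 ⟨hτ.1, hτ.2.trans hs.2⟩)).sub continuousOn_const).sub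
        ((continuous_id.smul continuous_const).continuousOn))
      (fun τ hτ => by
        have hd := hd1 τ ⟨hτ.1, hτ.2.trans_le hs.2⟩
        simpa using (hd.sub_const x₀).fun_sub ((hasDerivAt_id τ).smul_const F))
      (fun τ hτ => ((hρball _ (hmem τ (hsub1 ⟨hτ.1.le, hτ.2.le.trans hs.2⟩))).1).1)
    simpa [hx0] using key
  have hB2 : ∀ s ∈ Icc t (2*t), ‖x s - x t - (s - t) • G‖ ≤ ε₁ * (s - t) := by
    intro s hs
    have key := mvt_Ioo (fun τ => x τ - x t - (τ - t) • G) (fun τ => g (x τ) - G) ε₁ t s hs.1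
      (((hcont.mono (fun τ hτ => hsub2 ⟨hτ.1, hτ.2.trans hs.2⟩)).sub
          continuousOn_const).sub
        (((continuous_id.sub continuous_const).smul continuous_const).continuousOn))
      (fun τ hτ => by
        have hd := hd2 τ ⟨hτ.1, hτ.2.trans_le hs.2⟩
        simpa using (hd.sub_const (x t)).fun_sub
          (((hasDerivAt_id τ).sub_const t).smul_const G))
      (fun τ hτ => ((hρball _ (hmem τ (hsub2 ⟨hτ.1.le, hτ.2.le.trans hs.2⟩))).1).2)
    simpa using key
  have hB3 : ∀ s ∈ Icc t (2*t), ‖x s - x₀ - t • F - (s - t) • G‖ ≤ 2 * ε₁ * t := by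
    intro s hs
    have e1 := hB1 t ⟨ht.le, le_rfl⟩
    have e2 := hB2 s hs
    have heq : x s - x₀ - t • F - (s - t) • G
        = (x s - x t - (s - t) • G) + (x t - x₀ - t • F) := by abel
    rw [heq]
    calc ‖(x s - x t - (s - t) • G) + (x t - x₀ - t • F)‖
        ≤ ‖x s - x t - (s - t) • G‖ + ‖x t - x₀ - t • F‖ := norm_add_le _ _
      _ ≤ ε₁ * (s - t) + ε₁ * t := add_le_add e2 e1
      _ ≤ 2 * ε₁ * t := by nlinarith [hs.2, hε₁pos.le]
  -- fundamental theorem of calculus on both pieces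
  have hxc1 : ContinuousOn x (Icc 0 t) := hcont.mono hsub1
  have hxc2 : ContinuousOn x (Icc t (2*t)) := hcont.mono hsub2
  have hiφ : IntervalIntegrable (fun s => φ (x s)) volume 0 t := by
    apply ContinuousOn.intervalIntegrable
    rw [uIcc_of_le ht.le]
    exact hφ.continuous.comp_continuousOn hxc1
  have hiψ : IntervalIntegrable (fun s => ψ (x s)) volume t (2*t) := by
    apply ContinuousOn.intervalIntegrable
    rw [uIcc_of_le (by linarith)]
    exact hψ.continuous.comp_continuousOn hxc2
  have hftc1 : ∫ s in (0:ℝ)..t, φ (x s) = u (x t) - u (x 0) := by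
    apply intervalIntegral.integral_eq_sub_of_hasDeriv_right_of_le ht.le
      (hu.continuous.comp_continuousOn hxc1) _ hiφ
    intro s hs
    have hder : HasDerivAt (fun τ => u (x τ)) (φ (x s)) s :=
      (hudiff (x s)).hasFDerivAt.comp_hasDerivAt s (hd1 s hs)
    exact hder.hasDerivWithinAt
  have hftc2 : ∫ s in t..(2*t), ψ (x s) = u (x (2*t)) - u (x t) := by
    apply intervalIntegral.integral_eq_sub_of_hasDeriv_right_of_le (by linarith)
      (hu.continuous.comp_continuousOn hxc2) _ hiψ
    intro s hs
    have hder : HasDerivAt (fun τ => u (x τ)) (ψ (x s)) s :=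
      (hudiff (x s)).hasFDerivAt.comp_hasDerivAt s (hd2 s hs)
    exact hder.hasDerivWithinAt
  -- integral computations
  set c₁ : ℝ := L₁ F with hc₁
  set c₂ : ℝ := L₂ F with hc₂
  set c₃ : ℝ := L₂ G with hc₃
  have hlin1 : IntervalIntegrable (fun s => φ x₀ + s * c₁) volume 0 t :=
    ((by fun_prop : Continuous fun s : ℝ => φ x₀ + s * c₁)).intervalIntegrable 0 t
  have hlin2 : IntervalIntegrable (fun s => ψ x₀ + t * c₂ + (s - t) * c₃) volume t (2*t) :=
((by fun_prop : Continuous fun s : ℝ => ψ x₀ + t * c₂ + (s - t) * c₃)).intervalIntegrable t (2*t)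
  have hint1 : ∫ s in (0:ℝ)..t, (φ x₀ + s * c₁) = t * φ x₀ + t^2/2 * c₁ := by
    rw [intervalIntegral.integral_add (intervalIntegrable_const)
      (((by fun_prop : Continuous fun s : ℝ => s * c₁)).intervalIntegrable 0 t),
      intervalIntegral.integral_const, intervalIntegral.integral_mul_const, integral_id]
    simp only [smul_eq_mul, sub_zero]
    ring
  have hint2 : ∫ s in t..(2*t), (ψ x₀ + t * c₂ + (s - t) * c₃)
      = t * ψ x₀ + t^2 * c₂ + t^2/2 * c₃ := by
    have hsubint : ∫ s in t..(2*t), (s - t) = t^2/2 := by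
      rw [intervalIntegral.integral_sub intervalIntegrable_id
        intervalIntegrable_const, integral_id, intervalIntegral.integral_const]
      simp only [smul_eq_mul]
      ring
    rw [intervalIntegral.integral_add
      (intervalIntegrable_const.add intervalIntegrable_const)
      (((by fun_prop : Continuous fun s : ℝ => (s - t) * c₃)).intervalIntegrable _ _),
      intervalIntegral.integral_const, intervalIntegral.integral_mul_const, hsubint]
    simp only [smul_eq_mul]
    ring
  have hsplit1 : ∫ s in (0:ℝ)..t, φ (x s)
      = (∫ s in (0:ℝ)..t, (φ (x s) - (φ x₀ + s * c₁))) + (t * φ x₀ + t^2/2 * c₁) := by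
    rw [intervalIntegral.integral_sub hiφ hlin1, hint1]; ring
  have hsplit2 : ∫ s in t..(2*t), ψ (x s)
      = (∫ s in t..(2*t), (ψ (x s) - (ψ x₀ + t * c₂ + (s - t) * c₃)))
        + (t * ψ x₀ + t^2 * c₂ + t^2/2 * c₃) := by
    rw [intervalIntegral.integral_sub hiψ hlin2, hint2]; ring
  -- pointwise bounds and integral bounds
  have hpt1 : ∀ s ∈ uIoc (0:ℝ) t, ‖φ (x s) - (φ x₀ + s * c₁)‖ ≤ ε₁ * (M + ‖L₁‖) * t := by
      intro s hs
      rw [uIoc_of_le ht.le] at hs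
      have hsIcc : s ∈ Icc (0:ℝ) t := ⟨hs.1.le, hs.2⟩
      have h1 : ‖φ (x s) - φ x₀ - L₁ (x s - x₀)‖ ≤ ε₁ * ‖x s - x₀‖ :=
        (hρball _ (hmem s (hsub1 hsIcc))).2.1
      have h2 : ‖x s - x₀‖ ≤ M * s := hap s (hsub1 hsIcc)
      have h3 : ‖x s - x₀ - s • F‖ ≤ ε₁ * s := hB1 s hsIcc
      have h4 : ‖L₁ (x s - x₀ - s • F)‖ ≤ ‖L₁‖ * (ε₁ * s) :=
        (L₁.le_opNorm _).trans (mul_le_mul_of_nonneg_left h3 (norm_nonneg L₁))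
      have heq : φ (x s) - (φ x₀ + s * c₁)
          = (φ (x s) - φ x₀ - L₁ (x s - x₀)) + L₁ (x s - x₀ - s • F) := by
        have hmap : L₁ (x s - x₀ - s • F) = L₁ (x s - x₀) - s * c₁ := by
          rw [map_sub, L₁.map_smul]; simp [hc₁]
        rw [hmap]; ring
      rw [heq]
      calc ‖(φ (x s) - φ x₀ - L₁ (x s - x₀)) + L₁ (x s - x₀ - s • F)‖
          ≤ ‖φ (x s) - φ x₀ - L₁ (x s - x₀)‖ + ‖L₁ (x s - x₀ - s • F)‖ := norm_add_le _ _
        _ ≤ ε₁ * (M * s) + ‖L₁‖ * (ε₁ * s) :=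
            add_le_add (h1.trans (mul_le_mul_of_nonneg_left h2 hε₁pos.le)) h4
        _ = ε₁ * (M + ‖L₁‖) * s := by ring
        _ ≤ ε₁ * (M + ‖L₁‖) * t := by
            have hnn : 0 ≤ ε₁ * (M + ‖L₁‖) :=
              mul_nonneg hε₁pos.le (by linarith [norm_nonneg L₁])
            exact mul_le_mul_of_nonneg_left hsIcc.2 hnn
  have hbd1 : ‖∫ s in (0:ℝ)..t, (φ (x s) - (φ x₀ + s * c₁))‖
      ≤ (ε₁ * (M + ‖L₁‖) * t) * t := by
    have key := intervalIntegral.norm_integral_le_of_norm_le_const hpt1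
    rw [sub_zero, abs_of_pos ht] at key
    exact key
  have hpt2 : ∀ s ∈ uIoc t (2*t), ‖ψ (x s) - (ψ x₀ + t * c₂ + (s - t) * c₃)‖
      ≤ ε₁ * (2*M + 2*‖L₂‖) * t := by
      intro s hs
      rw [uIoc_of_le (by linarith)] at hs
      have hsIcc : s ∈ Icc t (2*t) := ⟨hs.1.le, hs.2⟩
      have hsIcc' : s ∈ Icc (0:ℝ) (2*t) := hsub2 hsIcc
      have h1 : ‖ψ (x s) - ψ x₀ - L₂ (x s - x₀)‖ ≤ ε₁ * ‖x s - x₀‖ :=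
        (hρball _ (hmem s hsIcc')).2.2
      have h2 : ‖x s - x₀‖ ≤ M * s := hap s hsIcc'
      have h3 : ‖x s - x₀ - t • F - (s - t) • G‖ ≤ 2 * ε₁ * t := hB3 s hsIcc
      have h4 : ‖L₂ (x s - x₀ - t • F - (s - t) • G)‖ ≤ ‖L₂‖ * (2 * ε₁ * t) :=
        (L₂.le_opNorm _).trans (mul_le_mul_of_nonneg_left h3 (norm_nonneg L₂))
      have heq : ψ (x s) - (ψ x₀ + t * c₂ + (s - t) * c₃)
          = (ψ (x s) - ψ x₀ - L₂ (x s - x₀)) + L₂ (x s - x₀ - t • F - (s - t) • G) := by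
        have hmap : L₂ (x s - x₀ - t • F - (s - t) • G)
            = L₂ (x s - x₀) - t * c₂ - (s - t) * c₃ := by
          rw [map_sub, map_sub, L₂.map_smul, L₂.map_smul]; simp [hc₂, hc₃]
        rw [hmap]; ring
      rw [heq]
      calc ‖(ψ (x s) - ψ x₀ - L₂ (x s - x₀)) + L₂ (x s - x₀ - t • F - (s - t) • G)‖
          ≤ ‖ψ (x s) - ψ x₀ - L₂ (x s - x₀)‖
            + ‖L₂ (x s - x₀ - t • F - (s - t) • G)‖ := norm_add_le _ _
        _ ≤ ε₁ * (M * s) + ‖L₂‖ * (2 * ε₁ * t) :=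
            add_le_add (h1.trans (mul_le_mul_of_nonneg_left h2 hε₁pos.le)) h4
        _ ≤ ε₁ * (M * (2*t)) + ‖L₂‖ * (2 * ε₁ * t) := by
            have hMs : M * s ≤ M * (2*t) := mul_le_mul_of_nonneg_left hsIcc.2 (by linarith)
            have := mul_le_mul_of_nonneg_left hMs hε₁pos.le
            linarith
        _ = ε₁ * (2*M + 2*‖L₂‖) * t := by ring
  have hbd2 : ‖∫ s in t..(2*t), (ψ (x s) - (ψ x₀ + t * c₂ + (s - t) * c₃))‖
      ≤ (ε₁ * (2*M + 2*‖L₂‖) * t) * t := by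
    have key := intervalIntegral.norm_integral_le_of_norm_le_const hpt2
    rw [show (2*t - t : ℝ) = t by ring, abs_of_pos ht] at key
    exact key
  -- assemble
  have hφ0 : (fderiv ℝ u x₀) F = φ x₀ := rfl
  have hψ0 : (fderiv ℝ u x₀) G = ψ x₀ := rfl
  have hdecomp : u (x (2*t)) - u x₀ - t * ((fderiv ℝ u x₀) F + (fderiv ℝ u x₀) G)
      - t^2 * (c₁/2 + c₂ + c₃/2)
      = (∫ s in (0:ℝ)..t, (φ (x s) - (φ x₀ + s * c₁)))
        + (∫ s in t..(2*t), (ψ (x s) - (ψ x₀ + t * c₂ + (s - t) * c₃))) := by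
    have hsum : u (x (2*t)) - u x₀
        = (∫ s in t..(2*t), ψ (x s)) + (∫ s in (0:ℝ)..t, φ (x s)) := by
      rw [hftc1, hftc2, hx0]; ring
    rw [hφ0, hψ0, hsum, hsplit1, hsplit2]; ring
  rw [← Real.norm_eq_abs, hdecomp]
  calc ‖(∫ s in (0:ℝ)..t, (φ (x s) - (φ x₀ + s * c₁)))
        + (∫ s in t..(2*t), (ψ (x s) - (ψ x₀ + t * c₂ + (s - t) * c₃)))‖
      ≤ (ε₁ * (M + ‖L₁‖) * t) * t + (ε₁ * (2*M + 2*‖L₂‖) * t) * t :=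
        (norm_add_le _ _).trans (add_le_add hbd1 hbd2)
    _ ≤ (ε₁ * C) * t^2 := by rw [hC]; nlinarith [hε₁pos.le, norm_nonneg L₁, norm_nonneg L₂]
    _ = ε * t^2 := by rw [hε₁def, div_mul_cancel₀ _ hCpos.ne']

lemma transpose_quad (S : Matrix (Fin m) (Fin m) ℝ) (a b : Fin m → ℝ) :
    Sᵀ *ᵥ a ⬝ᵥ b = S *ᵥ b ⬝ᵥ a := by
  rw [Matrix.mulVec_transpose, ← Matrix.dotProduct_mulVec, dotProduct_comm]

lemma Kof_quadform (S : Matrix (Fin m) (Fin m) ℝ) (a b : Fin m → ℝ) :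
    Kof S *ᵥ Sum.elim a b ⬝ᵥ Sum.elim a b
      = S *ᵥ a ⬝ᵥ a + 2 * (S *ᵥ a ⬝ᵥ b) + S *ᵥ b ⬝ᵥ b := by
  rw [Kof, Matrix.fromBlocks_mulVec, sumElim_dotProduct_sumElim]
  simp only [Sum.elim_comp_inl, Sum.elim_comp_inr, Matrix.add_mulVec,
    Matrix.smul_mulVec, add_dotProduct, smul_dotProduct, smul_eq_mul,
    transpose_quad]
  ring



lemma quad_eq (σ : Fin m → Euc n → Euc n) (hσ : ∀ j, ContDiff ℝ 1 (σ j))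
    (u : Euc n → ℝ) (hu : ContDiff ℝ 2 u) (x₀ : Euc n) (b c : Fin m → ℝ) :
    Smat σ u x₀ *ᵥ b ⬝ᵥ c
      = fderiv ℝ (fun y => fderiv ℝ u y (∑ j, c j • σ j y)) x₀ (∑ j, b j • σ j x₀) := by
  have hDu : ContDiff ℝ 1 (fderiv ℝ u) := hu.fderiv_right (by norm_num)
  have hφi : ∀ i : Fin m, DifferentiableAt ℝ (fun y => fderiv ℝ u y (σ i y)) x₀ :=
    fun i => ((hDu.clm_apply (hσ i)).differentiable (by norm_num)) x₀
  have hudiff : Differentiable ℝ u := hu.differentiable (by norm_num)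
  have hfun : (fun y => fderiv ℝ u y (∑ j, c j • σ j y))
      = fun y => ∑ i, c i * fderiv ℝ u y (σ i y) := by
    funext y
    rw [map_sum]
    exact Finset.sum_congr rfl fun i _ => by rw [(fderiv ℝ u y).map_smul]; simp
  have hgrad : ∀ i : Fin m, (fun y => ⟪gradient u y, σ i y⟫)
      = fun y => fderiv ℝ u y (σ i y) := by
    intro i; funext y; exact InnerProductSpace.toDual_symm_apply
  rw [hfun, fderiv_fun_sum (fun i _ => (hφi i).const_mul (c i))]
  rw [ContinuousLinearMap.sum_apply]
  simp only [fderiv_const_mul (hφi _), ContinuousLinearMap.coe_smul', Pi.smul_apply,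
    smul_eq_mul]
  rw [dotProduct_comm]
  simp only [dotProduct, Matrix.mulVec, Smat, Matrix.of_apply, hgrad]
  refine Finset.sum_congr rfl fun i _ => ?_
  rw [map_sum, Finset.mul_sum, Finset.mul_sum]
  refine Finset.sum_congr rfl fun j _ => ?_
  rw [ContinuousLinearMap.map_smul, smul_eq_mul]
  ring

end AuxProof

/-- Proposition 4.3: expansion of `u` along a single-switch trajectory of a
symmetric system, via the quadratic form of the matrix `K(x₀)`, with the particular case of
tangent vector fields. -/
theorem statement11 {n m : ℕ} (σ : Fin m → Euc n → Euc n) (hσ : ∀ j, ContDiff ℝ 1 (σ j))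
    (u : Euc n → ℝ) (hu : ContDiff ℝ 2 u)
    (a₁ a₂ : Euc m) (ha₁ : ‖a₁‖ ≤ 1) (ha₂ : ‖a₂‖ ≤ 1) (x₀ : Euc n)
    (X : ℝ → ℝ → Euc n)
    (hX : ∀ t > (0 : ℝ),
      IsSwitchTraj (fun y => ∑ j, a₁ j • σ j y) (fun y => ∑ j, a₂ j • σ j y) t x₀ (X t)) :
    ((fun t : ℝ => u (X t (2 * t)) - u x₀ -
        t * ⟪gradient u x₀, ∑ j, (a₁ j + a₂ j) • σ j x₀⟫ -
        t ^ 2 / 2 * (Kmat σ u x₀ *ᵥ Sum.elim (fun i => a₁ i) (fun i => a₂ i) ⬝ᵥ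
          Sum.elim (fun i => a₁ i) (fun i => a₂ i)))
      =o[𝓝[>] (0 : ℝ)] fun t => t ^ 2) ∧
    ((⟪gradient u x₀, ∑ j, a₁ j • σ j x₀⟫ = 0 ∧ ⟪gradient u x₀, ∑ j, a₂ j • σ j x₀⟫ = 0) →
      (fun t : ℝ => u (X t (2 * t)) - u x₀ -
          t ^ 2 / 2 * (Kmat σ u x₀ *ᵥ Sum.elim (fun i => a₁ i) (fun i => a₂ i) ⬝ᵥ
            Sum.elim (fun i => a₁ i) (fun i => a₂ i)))
        =o[𝓝[>] (0 : ℝ)] fun t => t ^ 2) := by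
  classical
  have hf : ContDiff ℝ 1 (fun y => ∑ j, a₁ j • σ j y) :=
    ContDiff.sum fun j _ => (hσ j).const_smul (a₁ j)
  have hg : ContDiff ℝ 1 (fun y => ∑ j, a₂ j • σ j y) :=
    ContDiff.sum fun j _ => (hσ j).const_smul (a₂ j)
  have h0 : ∀ v, ⟪gradient u x₀, v⟫ = fderiv ℝ u x₀ v :=
    fun v => InnerProductSpace.toDual_symm_apply
  have hlin : ⟪gradient u x₀, ∑ j, (a₁ j + a₂ j) • σ j x₀⟫
      = fderiv ℝ u x₀ (∑ j, a₁ j • σ j x₀) + fderiv ℝ u x₀ (∑ j, a₂ j • σ j x₀) := by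
    rw [h0, ← map_add]
    congr 1
    rw [← Finset.sum_add_distrib]
    exact Finset.sum_congr rfl fun j _ => by rw [add_smul]
  have hquad : Kmat σ u x₀ *ᵥ Sum.elim (fun i => a₁ i) (fun i => a₂ i) ⬝ᵥ
        Sum.elim (fun i => a₁ i) (fun i => a₂ i)
      = fderiv ℝ (fun y => fderiv ℝ u y (∑ j, a₁ j • σ j y)) x₀ (∑ j, a₁ j • σ j x₀)
        + 2 * fderiv ℝ (fun y => fderiv ℝ u y (∑ j, a₂ j • σ j y)) x₀ (∑ j, a₁ j • σ j x₀)
        + fderiv ℝ (fun y => fderiv ℝ u y (∑ j, a₂ j • σ j y)) x₀ (∑ j, a₂ j • σ j x₀) := by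
    rw [Kmat, Kof_quadform, quad_eq σ hσ u hu x₀ (fun i => a₁ i) (fun i => a₁ i),
      quad_eq σ hσ u hu x₀ (fun i => a₁ i) (fun i => a₂ i),
      quad_eq σ hσ u hu x₀ (fun i => a₂ i) (fun i => a₂ i)]
  have main : (fun t : ℝ => u (X t (2 * t)) - u x₀ -
        t * ⟪gradient u x₀, ∑ j, (a₁ j + a₂ j) • σ j x₀⟫ -
        t ^ 2 / 2 * (Kmat σ u x₀ *ᵥ Sum.elim (fun i => a₁ i) (fun i => a₂ i) ⬝ᵥ
          Sum.elim (fun i => a₁ i) (fun i => a₂ i)))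
      =o[𝓝[>] (0 : ℝ)] fun t => t ^ 2 := by
    rw [isLittleO_iff]
    intro c hc
    obtain ⟨δ, hδ, hkey⟩ := key_est (fun y => ∑ j, a₁ j • σ j y) (fun y => ∑ j, a₂ j • σ j y)
      hf hg u hu x₀ hc
    filter_upwards [Ioo_mem_nhdsGT_of_mem (Set.left_mem_Ico.mpr hδ)] with t htI
    obtain ⟨hx0, hcont, hd1, hd2⟩ := hX t htI.1
    have est := hkey t htI.1 htI.2 (X t) hx0 hcont hd1 hd2
    rw [hlin, hquad]
    have hrw : u (X t (2 * t)) - u x₀ -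
          t * (fderiv ℝ u x₀ (∑ j, a₁ j • σ j x₀) + fderiv ℝ u x₀ (∑ j, a₂ j • σ j x₀)) -
          t ^ 2 / 2 *
            (fderiv ℝ (fun y => fderiv ℝ u y (∑ j, a₁ j • σ j y)) x₀ (∑ j, a₁ j • σ j x₀)
              + 2 * fderiv ℝ (fun y => fderiv ℝ u y (∑ j, a₂ j • σ j y)) x₀
                  (∑ j, a₁ j • σ j x₀)
              + fderiv ℝ (fun y => fderiv ℝ u y (∑ j, a₂ j • σ j y)) x₀ (∑ j, a₂ j • σ j x₀))
        = u (X t (2 * t)) - u x₀ -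
          t * (fderiv ℝ u x₀ (∑ j, a₁ j • σ j x₀) + fderiv ℝ u x₀ (∑ j, a₂ j • σ j x₀)) -
          t ^ 2 *
            (fderiv ℝ (fun y => fderiv ℝ u y (∑ j, a₁ j • σ j y)) x₀ (∑ j, a₁ j • σ j x₀) / 2
              + fderiv ℝ (fun y => fderiv ℝ u y (∑ j, a₂ j • σ j y)) x₀ (∑ j, a₁ j • σ j x₀)
              + fderiv ℝ (fun y => fderiv ℝ u y (∑ j, a₂ j • σ j y)) x₀
                  (∑ j, a₂ j • σ j x₀) / 2) := by ring
    rw [hrw, Real.norm_eq_abs, Real.norm_eq_abs, abs_of_nonneg (sq_nonneg t)]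
    exact est
  refine ⟨main, ?_⟩
  rintro ⟨hz1, hz2⟩
  have hzero : ⟪gradient u x₀, ∑ j, (a₁ j + a₂ j) • σ j x₀⟫ = 0 := by
    rw [hlin, ← h0, ← h0, hz1, hz2, add_zero]
  have hfun : (fun t : ℝ => u (X t (2 * t)) - u x₀ -
        t ^ 2 / 2 * (Kmat σ u x₀ *ᵥ Sum.elim (fun i => a₁ i) (fun i => a₂ i) ⬝ᵥ
          Sum.elim (fun i => a₁ i) (fun i => a₂ i)))
      = (fun t : ℝ => u (X t (2 * t)) - u x₀ -
        t * ⟪gradient u x₀, ∑ j, (a₁ j + a₂ j) • σ j x₀⟫ -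
        t ^ 2 / 2 * (Kmat σ u x₀ *ᵥ Sum.elim (fun i => a₁ i) (fun i => a₂ i) ⬝ᵥ
          Sum.elim (fun i => a₁ i) (fun i => a₂ i))) := by
    funext t; rw [hzero]; ring
  rw [hfun]
  exact main
end

section
/- Let S be a real m×m matrix, S* = (S + ᵗS)/2, and let K be the symmetric 2m×2m block matrix K = [[S*, ᵗS],[S, S*]]. Let h(a₁,a₂) = K(a₁,a₂)·(a₁,a₂) for a₁,a₂ ∈ ℝᵐ. Then: (i) the minimum of h over B₁(0)×B₁(0) is nonpositive, since h(a,−a) = 0 for every a; (ii) every eigenvector v = (a₁,a₂) of K with nonzero eigenvalue satisfies |a₁| = |a₂|; (iii) if the minimum of h over B₁(0)×B₁(0) is negative, then the minimal eigenvalue λ of K is negative, the minimum equals 2λ, and it is attained at an eigenvector v = (a₁,a₂) of K with eigenvalue λ and |a₁| = |a₂| = 1. -/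
open Set Filter Metric Matrix MeasureTheory Asymptotics
open scoped RealInnerProductSpace ENNReal Topology

lemma tmul {m : ℕ} (S : Matrix (Fin m) (Fin m) ℝ) (x y : Fin m → ℝ) :
    (Sᵀ *ᵥ x) ⬝ᵥ y = (S *ᵥ y) ⬝ᵥ x := by
  rw [Matrix.mulVec_transpose, ← Matrix.dotProduct_mulVec, dotProduct_comm]

lemma amul {m : ℕ} (S : Matrix (Fin m) (Fin m) ℝ) (x y : Fin m → ℝ) :
    (((2:ℝ)⁻¹ • (S + Sᵀ)) *ᵥ x) ⬝ᵥ y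
      = 2⁻¹ * ((S *ᵥ x) ⬝ᵥ y + (S *ᵥ y) ⬝ᵥ x) := by
  rw [Matrix.smul_mulVec, Matrix.add_mulVec, smul_dotProduct,
    add_dotProduct, tmul]
  simp [smul_eq_mul]; try ring


lemma Kof_quad {m : ℕ} (S : Matrix (Fin m) (Fin m) ℝ) (a b : Fin m → ℝ) :
    Kof S *ᵥ Sum.elim a b ⬝ᵥ Sum.elim a b
      = (S *ᵥ a) ⬝ᵥ a + (S *ᵥ b) ⬝ᵥ b + 2 * ((S *ᵥ a) ⬝ᵥ b) := by
  rw [Kof, Matrix.fromBlocks_mulVec, sumElim_dotProduct_sumElim,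
    add_dotProduct, add_dotProduct]
  simp only [Sum.elim_comp_inl, Sum.elim_comp_inr]
  rw [amul, amul, tmul]
  ring

lemma part1 {m : ℕ} (S : Matrix (Fin m) (Fin m) ℝ) (a : Fin m → ℝ) :
    Kof S *ᵥ Sum.elim a (-a) ⬝ᵥ Sum.elim a (-a) = 0 := by
  rw [Kof_quad]
  simp only [Matrix.mulVec_neg, neg_dotProduct, dotProduct_neg, neg_neg]
  ring

lemma part2 {m : ℕ} (S : Matrix (Fin m) (Fin m) ℝ) (μ : ℝ) (v : Fin m ⊕ Fin m → ℝ)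
    (hμ : μ ≠ 0) (hv : Kof S *ᵥ v = μ • v) :
    (fun i => v (Sum.inl i)) ⬝ᵥ (fun i => v (Sum.inl i))
      = (fun i => v (Sum.inr i)) ⬝ᵥ (fun i => v (Sum.inr i)) := by
  set a : Fin m → ℝ := fun i => v (Sum.inl i) with ha
  set b : Fin m → ℝ := fun i => v (Sum.inr i) with hb
  have hv' : Kof S *ᵥ Sum.elim a b = μ • Sum.elim a b := by
    have : Sum.elim a b = v := by funext i; cases i <;> rfl
    rw [this]; exact hv
  rw [Kof, Matrix.fromBlocks_mulVec] at hv'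
  simp only [Sum.elim_comp_inl, Sum.elim_comp_inr] at hv'
  have h1 : ((2:ℝ)⁻¹ • (S + Sᵀ)) *ᵥ a + Sᵀ *ᵥ b = μ • a := by
    funext i; simpa using congrFun hv' (Sum.inl i)
  have h2 : S *ᵥ a + ((2:ℝ)⁻¹ • (S + Sᵀ)) *ᵥ b = μ • b := by
    funext i; simpa using congrFun hv' (Sum.inr i)
  have E1a := congrArg (· ⬝ᵥ a) h1
  have E1b := congrArg (· ⬝ᵥ b) h1
  have E2a := congrArg (· ⬝ᵥ a) h2
  have E2b := congrArg (· ⬝ᵥ b) h2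
  simp only [add_dotProduct, smul_dotProduct, smul_eq_mul] at E1a E1b E2a E2b
  rw [amul, tmul] at E1a
  rw [amul, tmul] at E1b
  rw [amul] at E2a
  rw [amul] at E2b
  rw [dotProduct_comm b a] at E2a
  have key : μ * (a ⬝ᵥ a) = μ * (b ⬝ᵥ b) := by
    linarith [E1a, E1b, E2a, E2b]
  exact mul_left_cancel₀ hμ key

lemma Kof_herm {m : ℕ} (S : Matrix (Fin m) (Fin m) ℝ) : (Kof S).IsHermitian := by
  unfold Kof
  have hA : ((2:ℝ)⁻¹ • (S + Sᵀ))ᵀ = (2:ℝ)⁻¹ • (S + Sᵀ) := by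
    rw [Matrix.transpose_smul, Matrix.transpose_add, Matrix.transpose_transpose, add_comm]
  rw [Matrix.IsHermitian, Matrix.conjTranspose_eq_transpose_of_trivial,
    Matrix.fromBlocks_transpose, hA, Matrix.transpose_transpose]

lemma rayleigh {n : Type} [Fintype n] [DecidableEq n] (K : Matrix n n ℝ)
    (hK : K.IsHermitian) (lam : ℝ) (hlam : ∀ i, lam ≤ hK.eigenvalues i) (x : n → ℝ) :
    lam * (x ⬝ᵥ x) ≤ (K *ᵥ x) ⬝ᵥ x := by
  set U : Matrix n n ℝ := (hK.eigenvectorUnitary : Matrix n n ℝ) with hU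
  have hUU : U * star U = 1 := Matrix.mem_unitaryGroup_iff.mp hK.eigenvectorUnitary.2
  have hdecomp : K - lam • 1 = U * Matrix.diagonal (fun i => hK.eigenvalues i - lam) * star U := by
    have hsp := hK.spectral_theorem
    have h1 : lam • (1 : Matrix n n ℝ) = U * (lam • 1) * star U := by
      rw [Matrix.mul_smul, Matrix.smul_mul, mul_one, hUU]
    have h2 : K - lam • (1 : Matrix n n ℝ)
        = U * Matrix.diagonal (RCLike.ofReal ∘ hK.eigenvalues) * star U - U * (lam • 1) * star U := by
      rw [← h1]; exact congrArg (fun M => M - lam • 1) hsp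
    rw [h2, ← Matrix.sub_mul, ← Matrix.mul_sub]
    congr 1
    congr 1
    rw [← Matrix.diagonal_one, ← Matrix.diagonal_smul, Matrix.diagonal_sub]
    congr 1
    funext i
    simp
  have hpsd : (K - lam • 1).PosSemidef := by
    rw [hdecomp, Matrix.star_eq_conjTranspose]
    exact (Matrix.posSemidef_diagonal_iff.mpr fun i => sub_nonneg.2 (hlam i)).mul_mul_conjTranspose_same U
  have := hpsd.dotProduct_mulVec_nonneg x
  simp only [Matrix.sub_mulVec, Matrix.smul_mulVec, Matrix.one_mulVec, star_trivial,
    dotProduct_sub, dotProduct_smul, smul_eq_mul] at this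
  rw [dotProduct_comm x (K *ᵥ x)] at this
  linarith


/-- Proposition 4.4: properties of the quadratic form `h` of the block
matrix `K`: (i) `h(a,-a) = 0`; (ii) eigenvectors of `K` with nonzero eigenvalue have components
of equal length; (iii) a negative minimum of `h` on `B₁(0) × B₁(0)` is `2λ`, with `λ < 0` the
minimal eigenvalue of `K`, attained at an eigenvector `(a₁,a₂)` with `|a₁| = |a₂| = 1`. -/
theorem statement12 {m : ℕ} (S : Matrix (Fin m) (Fin m) ℝ) :
    (∀ a : Fin m → ℝ, Kof S *ᵥ Sum.elim a (-a) ⬝ᵥ Sum.elim a (-a) = 0) ∧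
    (∀ (μ : ℝ) (v : Fin m ⊕ Fin m → ℝ), μ ≠ 0 → Kof S *ᵥ v = μ • v →
      ∑ i, v (Sum.inl i) ^ 2 = ∑ i, v (Sum.inr i) ^ 2) ∧
    (∀ v₀ : Fin m ⊕ Fin m → ℝ,
      (∑ i, v₀ (Sum.inl i) ^ 2 ≤ 1) → (∑ i, v₀ (Sum.inr i) ^ 2 ≤ 1) →
      Kof S *ᵥ v₀ ⬝ᵥ v₀ < 0 →
      (∀ w : Fin m ⊕ Fin m → ℝ,
        (∑ i, w (Sum.inl i) ^ 2 ≤ 1) → (∑ i, w (Sum.inr i) ^ 2 ≤ 1) →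
        Kof S *ᵥ v₀ ⬝ᵥ v₀ ≤ Kof S *ᵥ w ⬝ᵥ w) →
      ∃ lam : ℝ, lam < 0 ∧
        (∃ v ≠ 0, Kof S *ᵥ v = lam • v) ∧
        (∀ μ : ℝ, (∃ w ≠ 0, Kof S *ᵥ w = μ • w) → lam ≤ μ) ∧
        Kof S *ᵥ v₀ ⬝ᵥ v₀ = 2 * lam ∧
        ∃ v : Fin m ⊕ Fin m → ℝ, Kof S *ᵥ v = lam • v ∧
          (∑ i, v (Sum.inl i) ^ 2 = 1) ∧ (∑ i, v (Sum.inr i) ^ 2 = 1) ∧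
          Kof S *ᵥ v ⬝ᵥ v = Kof S *ᵥ v₀ ⬝ᵥ v₀) := by

  have hdot : ∀ w : Fin m ⊕ Fin m → ℝ,
      w ⬝ᵥ w = ∑ i, w (Sum.inl i) ^ 2 + ∑ i, w (Sum.inr i) ^ 2 := by
    intro w; simp [dotProduct, Fintype.sum_sum_type, sq]
  refine ⟨part1 S, ?_, ?_⟩
  · intro μ v hμ hv
    have := part2 S μ v hμ hv
    simpa [dotProduct, sq] using this
  · intro v₀ h1 h2 hneg hmin
    rcases Nat.eq_zero_or_pos m with hm | hm
    · exfalso; subst hm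
      have h0 : Kof S *ᵥ v₀ ⬝ᵥ v₀ = 0 := by simp [dotProduct]
      linarith
    haveI : Nonempty (Fin m ⊕ Fin m) := ⟨Sum.inl ⟨0, hm⟩⟩
    have hK := Kof_herm S
    obtain ⟨i₀, -, hmin'⟩ := Finset.exists_min_image Finset.univ hK.eigenvalues
      ⟨Classical.arbitrary _, Finset.mem_univ _⟩
    set lam := hK.eigenvalues i₀ with hlamdef
    have hlam : ∀ i, lam ≤ hK.eigenvalues i := fun i => hmin' i (Finset.mem_univ i)
    have hray := rayleigh (Kof S) hK lam hlam
    have hv₀nn : 0 ≤ v₀ ⬝ᵥ v₀ := by rw [hdot]; positivity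
    have hv₀le : v₀ ⬝ᵥ v₀ ≤ 2 := by rw [hdot]; linarith
    have hlamneg : lam < 0 := by
      by_contra h
      push_neg at h
      nlinarith [hray v₀]
    -- unit eigenvector
    set u : Fin m ⊕ Fin m → ℝ := ⇑(hK.eigenvectorBasis i₀) with hu
    have heig : Kof S *ᵥ u = lam • u := hK.mulVec_eigenvectorBasis i₀
    have hunorm : u ⬝ᵥ u = 1 := by
      have hn : ‖hK.eigenvectorBasis i₀‖ = 1 := hK.eigenvectorBasis.orthonormal.1 i₀
      have h2 : (inner ℝ (hK.eigenvectorBasis i₀) (hK.eigenvectorBasis i₀) : ℝ) = 1 := by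
        rw [real_inner_self_eq_norm_mul_norm, hn]; norm_num
      rw [PiLp.inner_apply] at h2
      simpa [RCLike.inner_apply, dotProduct, hu, sq] using h2
    have hune : u ≠ 0 := by
      intro h0; rw [h0] at hunorm; simp [dotProduct] at hunorm
    have hu2 := part2 S lam u (ne_of_lt hlamneg) heig
    have hsum : (∑ i, u (Sum.inl i) ^ 2) = ∑ i, u (Sum.inr i) ^ 2 := by
      simpa [dotProduct, sq] using hu2
    have husum1 : (∑ i, u (Sum.inl i) ^ 2) = 1 / 2 := by
      have := hdot u; rw [hunorm] at this; linarith
    have husum2 : (∑ i, u (Sum.inr i) ^ 2) = 1 / 2 := by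
      rw [← hsum]; exact husum1
    -- scaled eigenvector
    set v : Fin m ⊕ Fin m → ℝ := (Real.sqrt 2 : ℝ) • u with hv
    have hKv : Kof S *ᵥ v = lam • v := by
      rw [hv, Matrix.mulVec_smul, heig, smul_comm]
    have hsq2 : (Real.sqrt 2) ^ 2 = 2 := Real.sq_sqrt (by norm_num)
    have hvsum1 : (∑ i, v (Sum.inl i) ^ 2) = 1 := by
      simp only [hv, Pi.smul_apply, smul_eq_mul, mul_pow, ← Finset.mul_sum, hsq2, husum1]
      norm_num
    have hvsum2 : (∑ i, v (Sum.inr i) ^ 2) = 1 := by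
      simp only [hv, Pi.smul_apply, smul_eq_mul, mul_pow, ← Finset.mul_sum, hsq2, husum2]
      norm_num
    have hvdot : v ⬝ᵥ v = 2 := by rw [hdot, hvsum1, hvsum2]; norm_num
    have hvquad : Kof S *ᵥ v ⬝ᵥ v = 2 * lam := by
      rw [hKv, smul_dotProduct, hvdot, smul_eq_mul]; ring
    have hmin2 : Kof S *ᵥ v₀ ⬝ᵥ v₀ = 2 * lam := by
      have hle := hmin v (le_of_eq hvsum1) (le_of_eq hvsum2)
      rw [hvquad] at hle
      have hge : lam * (v₀ ⬝ᵥ v₀) ≤ Kof S *ᵥ v₀ ⬝ᵥ v₀ := hray v₀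
      nlinarith
    refine ⟨lam, hlamneg, ⟨u, hune, heig⟩, ?_, hmin2, v, hKv, hvsum1, hvsum2, by rw [hvquad, hmin2]⟩
    rintro μ ⟨w, hw0, hw⟩
    have hr := hray w
    rw [hw, smul_dotProduct, smul_eq_mul] at hr
    have hwpos : 0 < w ⬝ᵥ w :=
      lt_of_le_of_ne (by rw [hdot]; positivity)
        (fun h => hw0 (dotProduct_self_eq_zero.mp h.symm))
    nlinarith
end
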